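/- arXiv:1811.12031 — 4 statements merged into one kernel-verified Lean document; each statement's English description precedes it below -/
import Mathlib

section
/- If G is a connected graph on n ≥ 3 vertices, then ρ₁(G) − ρ₂(G) ≤ ρ₂(G)/(n−2), and equality holds if and only if G is the complete graph K_n. -/
open Matrix SimpleGraph

/-- `x` is a (unit-normalizable) Pareto eigenvector of `A` associated with `lam`:
`x` is nonzero, entrywise nonnegative, `A x ≥ lam • x` entrywise, and
`lam = xᵀAx / xᵀx`. -/
def IsParetoEigenpair {n : ℕ} (A : Matrix (Fin n) (Fin n) ℝ) (lam : ℝ) (x : Fin n → ℝ) : Prop :=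
  x ≠ 0 ∧ (∀ i, 0 ≤ x i) ∧ (∀ i, lam * x i ≤ A.mulVec x i) ∧
    lam = (x ⬝ᵥ A.mulVec x) / (x ⬝ᵥ x)

/-- `lam` is a Pareto eigenvalue of `A`. -/
def IsParetoEigenvalue {n : ℕ} (A : Matrix (Fin n) (Fin n) ℝ) (lam : ℝ) : Prop :=
  ∃ x, IsParetoEigenpair A lam x

/-- The distance matrix of a graph on `Fin n`, as a real matrix. -/
noncomputable def distMatrix {n : ℕ} (G : SimpleGraph (Fin n)) : Matrix (Fin n) (Fin n) ℝ :=
  fun i j => (G.dist i j : ℝ)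

/-- The set `Π(G)` of distance Pareto eigenvalues of `G`. -/
def distParetoSet {n : ℕ} (G : SimpleGraph (Fin n)) : Set ℝ :=
  {lam | IsParetoEigenvalue (distMatrix G) lam}

/-- `a` is the `k`-th largest element of the (finite) set `S`. -/
def IsKthLargest (S : Set ℝ) (k : ℕ) (a : ℝ) : Prop :=
  a ∈ S ∧ {x ∈ S | a < x}.ncard = k - 1

/-- `a` is the `k`-th smallest element of the (finite) set `S`. -/
def IsKthSmallest (S : Set ℝ) (k : ℕ) (a : ℝ) : Prop :=
  a ∈ S ∧ {x ∈ S | x < a}.ncard = k - 1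

/-- The star graph `S_n` on `n` vertices: vertex `0` is adjacent to all others. -/
def starGraph (n : ℕ) : SimpleGraph (Fin n) where
  Adj i j := i ≠ j ∧ (i.val = 0 ∨ j.val = 0)
  symm := ⟨fun i j h => ⟨h.1.symm, h.2.symm⟩⟩
  loopless := ⟨fun i h => h.1 rfl⟩

/-- The graph `S_n⁺`: the star `S_n` plus one edge between the pendant vertices `1` and `2`. -/
def starPlusGraph (n : ℕ) : SimpleGraph (Fin n) where
  Adj i j := i ≠ j ∧
    ((i.val = 0 ∨ j.val = 0) ∨ (i.val = 1 ∧ j.val = 2) ∨ (i.val = 2 ∧ j.val = 1))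
  symm := ⟨fun i j h => ⟨h.1.symm, by tauto⟩⟩
  loopless := ⟨fun i h => h.1 rfl⟩

/-- The wheel graph `W_n` on `n` vertices: hub `0` joined to the cycle `1 - 2 - ⋯ - (n-1) - 1`. -/
def wheelGraph (n : ℕ) : SimpleGraph (Fin n) where
  Adj i j := i ≠ j ∧ (i.val = 0 ∨ j.val = 0 ∨
    i.val + 1 = j.val ∨ j.val + 1 = i.val ∨
    (i.val = 1 ∧ j.val = n - 1) ∨ (j.val = 1 ∧ i.val = n - 1))
  symm := ⟨fun i j h => ⟨h.1.symm, by tauto⟩⟩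
  loopless := ⟨fun i h => h.1 rfl⟩

/-- `K₄ - e`: the complete graph on 4 vertices minus the edge `{0,1}`. -/
def k4MinusE : SimpleGraph (Fin 4) where
  Adj i j := i ≠ j ∧ ¬((i.val = 0 ∧ j.val = 1) ∨ (i.val = 1 ∧ j.val = 0))
  symm := ⟨fun i j h => ⟨h.1.symm, by tauto⟩⟩
  loopless := ⟨fun i h => h.1 rfl⟩

/-- `C₃ * C₃`: two triangles `{0,1,2}` and `{0,3,4}` glued at the common vertex `0`. -/
def c3c3Graph : SimpleGraph (Fin 5) where
  Adj i j := i ≠ j ∧ (i.val = 0 ∨ j.val = 0 ∨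
    (i.val ≤ 2 ∧ j.val ≤ 2) ∨ (3 ≤ i.val ∧ 3 ≤ j.val))
  symm := ⟨fun i j h => ⟨h.1.symm, by tauto⟩⟩
  loopless := ⟨fun i h => h.1 rfl⟩

section Aux
variable {n : ℕ}
noncomputable def ev (i : Fin n) : Fin n → ℝ := Pi.single i 1
variable (A : Matrix (Fin n) (Fin n) ℝ)

lemma dot_self_nonneg (x : Fin n → ℝ) : 0 ≤ x ⬝ᵥ x :=
  Finset.sum_nonneg fun _ _ => mul_self_nonneg _

lemma dot_self_pos {x : Fin n → ℝ} (hx : x ≠ 0) : 0 < x ⬝ᵥ x := by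
  rcases (dot_self_nonneg x).lt_or_eq with h | h
  · exact h
  · exact absurd (dotProduct_self_eq_zero.mp h.symm) hx

lemma cont_quad : Continuous fun y : Fin n → ℝ => y ⬝ᵥ A.mulVec y := by
  unfold dotProduct Matrix.mulVec
  exact continuous_finset_sum _ fun i _ => (continuous_apply i).mul
    (continuous_finset_sum _ fun j _ => continuous_const.mul (continuous_apply j))

lemma cont_dot : Continuous fun y : Fin n → ℝ => y ⬝ᵥ y := by
  unfold dotProduct
  exact continuous_finset_sum _ fun i _ => (continuous_apply i).mul (continuous_apply i)

lemma exists_max (S : Set (Fin n)) (hS : S.Nonempty) :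
    ∃ y : Fin n → ℝ, (∀ i, 0 ≤ y i) ∧ (∀ i ∉ S, y i = 0) ∧ y ⬝ᵥ y = 1 ∧
      ∀ z : Fin n → ℝ, (∀ i, 0 ≤ z i) → (∀ i ∉ S, z i = 0) →
        z ⬝ᵥ A.mulVec z ≤ (y ⬝ᵥ A.mulVec y) * (z ⬝ᵥ z) := by
  classical
  obtain ⟨s, hs⟩ := hS
  set K : Set (Fin n → ℝ) := {y | (∀ i, 0 ≤ y i) ∧ (∀ i ∉ S, y i = 0) ∧ y ⬝ᵥ y = 1} with hK
  have hKne : K.Nonempty := by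
    refine ⟨ev s, fun i => ?_, fun i hi => ?_, ?_⟩
    · unfold ev; by_cases h : i = s <;> simp [h, Pi.single_apply]
    · unfold ev; have : i ≠ s := fun h => hi (h ▸ hs); simp [Pi.single_apply, this]
    · simp [ev, single_dotProduct, Pi.single_apply]
  have hKclosed : IsClosed K := by
    have h1 : K = (⋂ i, {y : Fin n → ℝ | 0 ≤ y i}) ∩
        ((⋂ i ∈ Sᶜ, {y : Fin n → ℝ | y i = 0}) ∩ {y | y ⬝ᵥ y = 1}) := by
      ext y
      simp only [hK, Set.mem_setOf_eq, Set.mem_inter_iff, Set.mem_iInter, Set.mem_compl_iff]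
    rw [h1]
    refine (isClosed_iInter fun i => isClosed_le continuous_const (continuous_apply i)).inter
      ((isClosed_biInter fun i _ => isClosed_eq (continuous_apply i) continuous_const).inter
        (isClosed_eq cont_dot continuous_const))
  have hKbdd : Bornology.IsBounded K := by
    refine (Metric.isBounded_iff_subset_closedBall 0).mpr ⟨1, fun y hy => ?_⟩
    obtain ⟨h0, _, h1⟩ := hy
    simp only [Metric.mem_closedBall, dist_zero_right]
    rw [pi_norm_le_iff_of_nonneg zero_le_one]
    intro i
    rw [Real.norm_eq_abs, abs_le]
    have hsq : y i * y i ≤ 1 := by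
      rw [← h1]
      unfold dotProduct
      exact Finset.single_le_sum (f := fun j => y j * y j)
        (fun j _ => mul_self_nonneg _) (Finset.mem_univ i)
    constructor <;> nlinarith [h0 i]
  obtain ⟨y, hyK, hymax⟩ := (Metric.isCompact_of_isClosed_isBounded hKclosed hKbdd).exists_isMaxOn hKne
    ((cont_quad A).continuousOn)
  obtain ⟨hy0, hyS, hy1⟩ := hyK
  refine ⟨y, hy0, hyS, hy1, fun z hz0 hzS => ?_⟩
  by_cases hz : z = 0
  · simp [hz]
  · have hzz : 0 < z ⬝ᵥ z := dot_self_pos hz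
    set c : ℝ := (Real.sqrt (z ⬝ᵥ z))⁻¹ with hc
    have hsq : Real.sqrt (z ⬝ᵥ z) ^ 2 = z ⬝ᵥ z := Real.sq_sqrt hzz.le
    have hsqpos : 0 < Real.sqrt (z ⬝ᵥ z) := Real.sqrt_pos.mpr hzz
    have hcc : c * c = (z ⬝ᵥ z)⁻¹ := by
      rw [hc, ← mul_inv, Real.mul_self_sqrt hzz.le]
    have hcw : (c • z) ⬝ᵥ (c • z) = 1 := by
      rw [smul_dotProduct, dotProduct_smul]
      simp only [smul_eq_mul]
      rw [← mul_assoc, hcc, inv_mul_cancel₀ hzz.ne']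
    have hwK : c • z ∈ K := by
      refine ⟨fun i => mul_nonneg (by positivity) (hz0 i), fun i hi => by simp [hzS i hi], hcw⟩
    have hle := hymax hwK
    simp only [Set.mem_setOf_eq] at hle
    have hQw : (c • z) ⬝ᵥ A.mulVec (c • z) = c ^ 2 * (z ⬝ᵥ A.mulVec z) := by
      rw [smul_dotProduct, Matrix.mulVec_smul, dotProduct_smul]
      simp only [smul_eq_mul]; ring
    rw [hQw] at hle
    have hc2 : c ^ 2 = (z ⬝ᵥ z)⁻¹ := by
      rw [hc, ← hsq]; field_simp; rw [Real.sqrt_sq hsqpos.le]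
    rw [hc2] at hle
    calc z ⬝ᵥ A.mulVec z = ((z ⬝ᵥ z)⁻¹ * (z ⬝ᵥ A.mulVec z)) * (z ⬝ᵥ z) := by field_simp
    _ ≤ (y ⬝ᵥ A.mulVec y) * (z ⬝ᵥ z) := by
        exact mul_le_mul_of_nonneg_right hle hzz.le

lemma quad_expand (hsym : ∀ i j, A i j = A j i) (x : Fin n → ℝ) (i : Fin n) (t : ℝ) :
    (x + t • ev i) ⬝ᵥ A.mulVec (x + t • ev i)
      = x ⬝ᵥ A.mulVec x + 2 * t * A.mulVec x i + t ^ 2 * A i i := by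
  have h1 : A.mulVec (ev i) = fun j => A j i := by
    ext j; unfold ev; rw [Matrix.mulVec_single]; simp
  have h2 : x ⬝ᵥ (fun j => A j i) = A.mulVec x i := by
    simp only [dotProduct, Matrix.mulVec]
    exact Finset.sum_congr rfl fun j _ => by show x j * A j i = A i j * x j; rw [hsym i j, mul_comm]
  have h3 : (ev i) ⬝ᵥ A.mulVec x = A.mulVec x i := by
    simp [ev, single_dotProduct]
  have h4 : (ev i) ⬝ᵥ (fun j => A j i) = A i i := by
    simp [ev, single_dotProduct]
  simp only [Matrix.mulVec_add, Matrix.mulVec_smul, dotProduct_add,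
    add_dotProduct, dotProduct_smul, smul_dotProduct, smul_eq_mul, h1]
  rw [h2, h3, h4]; ring

lemma norm_expand (x : Fin n → ℝ) (i : Fin n) (t : ℝ) :
    (x + t • ev i) ⬝ᵥ (x + t • ev i) = x ⬝ᵥ x + 2 * t * x i + t ^ 2 := by
  have h3 : (ev i) ⬝ᵥ x = x i := by simp [ev, single_dotProduct]
  have h4 : x ⬝ᵥ (ev i) = x i := by simp [ev, dotProduct_single]
  have h5 : (ev i) ⬝ᵥ (ev i) = 1 := by simp [ev, single_dotProduct, Pi.single_apply]
  simp only [dotProduct_add, add_dotProduct, dotProduct_smul,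
    smul_dotProduct, smul_eq_mul, h3, h4, h5]
  ring

lemma mulVec_nonneg (hnn : ∀ i j, 0 ≤ A i j) {y : Fin n → ℝ} (hy0 : ∀ i, 0 ≤ y i) (i : Fin n) :
    0 ≤ A.mulVec y i := by
  simp only [Matrix.mulVec, dotProduct]
  exact Finset.sum_nonneg fun j _ => mul_nonneg (hnn i j) (hy0 j)

lemma max_pointwise (hsym : ∀ i j, A i j = A j i) (hnn : ∀ i j, 0 ≤ A i j)
    {S : Set (Fin n)} {lam : ℝ} {y : Fin n → ℝ}
    (hy0 : ∀ i, 0 ≤ y i) (hyS : ∀ i ∉ S, y i = 0)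
    (hQ : y ⬝ᵥ A.mulVec y = lam * (y ⬝ᵥ y))
    (hmax : ∀ z : Fin n → ℝ, (∀ i, 0 ≤ z i) → (∀ i ∉ S, z i = 0) →
      z ⬝ᵥ A.mulVec z ≤ lam * (z ⬝ᵥ z)) :
    ∀ i, lam * y i ≤ A.mulVec y i := by
  intro i
  by_cases hyi : y i = 0
  · rw [hyi, mul_zero]; exact mulVec_nonneg A hnn hy0 i
  have hyipos : 0 < y i := (hy0 i).lt_of_ne (Ne.symm hyi)
  by_contra hcon
  push_neg at hcon
  set δ : ℝ := lam * y i - A.mulVec y i with hδdef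
  have hδ : 0 < δ := by simp [hδdef]; linarith
  set c : ℝ := |A i i - lam| with hc
  set t : ℝ := min (y i) (δ / (c + 1)) with ht
  have hcpos : (0:ℝ) < c + 1 := by positivity
  have ht0 : 0 < t := lt_min hyipos (by positivity)
  have htyi : t ≤ y i := min_le_left _ _
  have htc : t * (c + 1) ≤ δ := by
    rw [← le_div_iff₀ hcpos]; exact min_le_right _ _
  set z : Fin n → ℝ := y + (-t) • ev i with hz
  have hzi : ∀ j, z j = if j = i then y i - t else y j := by
    intro j
    simp only [hz, Pi.add_apply, Pi.smul_apply, smul_eq_mul, ev, Pi.single_apply]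
    by_cases hj : j = i <;> simp [hj] <;> ring
  have hz0 : ∀ j, 0 ≤ z j := by
    intro j; rw [hzi j]
    by_cases hj : j = i <;> simp [hj]
    · linarith
    · exact hy0 j
  have hzS : ∀ j ∉ S, z j = 0 := by
    intro j hj
    have hji : j ≠ i := by rintro rfl; exact hyi (hyS j hj)
    rw [hzi j, if_neg hji]; exact hyS j hj
  have hle := hmax z hz0 hzS
  rw [hz, quad_expand A hsym, norm_expand] at hle
  have habs1 : A i i - lam ≤ c := le_abs_self _
  have habs2 : -(A i i - lam) ≤ c := neg_le_abs _
  nlinarith [sq_nonneg t, mul_pos ht0 hδ]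

lemma comp_slack {lam : ℝ} {y : Fin n → ℝ}
    (hy0 : ∀ i, 0 ≤ y i) (hQ : y ⬝ᵥ A.mulVec y = lam * (y ⬝ᵥ y))
    (hpw : ∀ i, lam * y i ≤ A.mulVec y i) :
    ∀ i, 0 < y i → A.mulVec y i = lam * y i := by
  have hsum : ∑ i, y i * (A.mulVec y i - lam * y i) = 0 := by
    have : ∑ i, y i * (A.mulVec y i - lam * y i)
        = y ⬝ᵥ A.mulVec y - lam * (y ⬝ᵥ y) := by
      simp only [dotProduct, Finset.mul_sum]
      rw [← Finset.sum_sub_distrib]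
      exact Finset.sum_congr rfl fun i _ => by ring
    rw [this, hQ]; ring
  have hterm : ∀ i ∈ Finset.univ, 0 ≤ y i * (A.mulVec y i - lam * y i) :=
    fun i _ => mul_nonneg (hy0 i) (by linarith [hpw i])
  have hzero := (Finset.sum_eq_zero_iff_of_nonneg hterm).mp hsum
  intro i hi
  have := hzero i (Finset.mem_univ i)
  rcases mul_eq_zero.mp this with h | h
  · exact absurd h hi.ne'
  · linarith

lemma full_support (hsym : ∀ i j, A i j = A j i) (hoff : ∀ i j, i ≠ j → 0 < A i j)
    {lam : ℝ} {y : Fin n → ℝ}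
    (hy0 : ∀ i, 0 ≤ y i) (hy1 : y ⬝ᵥ y = 1) (hQ : y ⬝ᵥ A.mulVec y = lam)
    (hmax : ∀ z : Fin n → ℝ, (∀ i, 0 ≤ z i) → z ⬝ᵥ A.mulVec z ≤ lam * (z ⬝ᵥ z)) :
    ∀ v, 0 < y v := by
  intro v
  rcases (hy0 v).lt_or_eq with h | h
  · exact h
  exfalso
  have hyv : y v = 0 := h.symm
  have hyne : y ≠ 0 := by
    intro h0
    rw [h0] at hy1; simp at hy1
  obtain ⟨j, hj⟩ := Function.ne_iff.mp hyne
  have hyj : 0 < y j := (hy0 j).lt_of_ne (Ne.symm hj)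
  have hjv : j ≠ v := by rintro rfl; exact hj hyv
  have hδ : 0 < A.mulVec y v := by
    have hterm : ∀ k ∈ Finset.univ, (0:ℝ) ≤ A v k * y k := by
      intro k _
      by_cases hk : k = v
      · simp [hk, hyv]
      · exact mul_nonneg (hoff v k (Ne.symm hk)).le (hy0 k)
    have hsingle : A v j * y j ≤ ∑ k, A v k * y k :=
      Finset.single_le_sum hterm (Finset.mem_univ j)
    have : 0 < A v j * y j := mul_pos (hoff v j (Ne.symm hjv)) hyj
    simp only [Matrix.mulVec, dotProduct]
    linarith
  set δ : ℝ := A.mulVec y v with hδdef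
  set c : ℝ := |A v v - lam| with hc
  set t : ℝ := δ / (c + 1) with ht
  have hcpos : (0:ℝ) < c + 1 := by positivity
  have ht0 : 0 < t := by positivity
  have htc : t * (c + 1) ≤ δ := by rw [ht]; field_simp; exact le_rfl
  set z : Fin n → ℝ := y + t • ev v with hz
  have hz0 : ∀ i, 0 ≤ z i := by
    intro i
    simp only [hz, Pi.add_apply, Pi.smul_apply, smul_eq_mul, ev, Pi.single_apply]
    by_cases hi : i = v
    · simp [hi]; linarith [hy0 i, hi ▸ hy0 i]
    · simp [hi]; exact hy0 i
  have hle := hmax z hz0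
  rw [hz, quad_expand A hsym, norm_expand, hy1, hyv, hQ] at hle
  have habs1 : A v v - lam ≤ c := le_abs_self _
  have habs2 : -(A v v - lam) ≤ c := neg_le_abs _
  nlinarith [sq_nonneg t, mul_pos ht0 hδ]

/-- A constrained maximizer gives a Pareto eigenvalue. -/
lemma max_is_pareto (hsym : ∀ i j, A i j = A j i) (hnn : ∀ i j, 0 ≤ A i j)
    {S : Set (Fin n)} {y : Fin n → ℝ}
    (hy0 : ∀ i, 0 ≤ y i) (hyS : ∀ i ∉ S, y i = 0) (hy1 : y ⬝ᵥ y = 1)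
    (hmax : ∀ z : Fin n → ℝ, (∀ i, 0 ≤ z i) → (∀ i ∉ S, z i = 0) →
      z ⬝ᵥ A.mulVec z ≤ (y ⬝ᵥ A.mulVec y) * (z ⬝ᵥ z)) :
    IsParetoEigenpair A (y ⬝ᵥ A.mulVec y) y := by
  have hyne : y ≠ 0 := by
    intro h0; rw [h0] at hy1; simp at hy1
  refine ⟨hyne, hy0, ?_, by rw [hy1, div_one]⟩
  exact max_pointwise A hsym hnn hy0 hyS (by rw [hy1, mul_one]) hmax

/-- Any Pareto eigenvalue is at most the global nonnegative max. -/
lemma pareto_le_max {lam lam' : ℝ} {y : Fin n → ℝ}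
    (hy1 : y ⬝ᵥ y = 1) (hQ : y ⬝ᵥ A.mulVec y = lam')
    (hmax : ∀ z : Fin n → ℝ, (∀ i, 0 ≤ z i) → (∀ i ∉ (Set.univ : Set (Fin n)), z i = 0) →
      z ⬝ᵥ A.mulVec z ≤ (y ⬝ᵥ A.mulVec y) * (z ⬝ᵥ z))
    (h : IsParetoEigenvalue A lam) : lam ≤ lam' := by
  obtain ⟨x, hxne, hx0, _, hxval⟩ := h
  have hxx : 0 < x ⬝ᵥ x := dot_self_pos hxne
  have hle := hmax x hx0 (fun i hi => absurd (Set.mem_univ i) hi)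
  rw [hQ] at hle
  rw [hxval, div_le_iff₀ hxx]
  exact hle

/-- The set of Pareto eigenvalues of any real matrix is finite. -/
lemma pareto_finite : {lam : ℝ | IsParetoEigenvalue A lam}.Finite := by
  classical
  have hfin : (⋃ s ∈ (Set.univ : Set (Finset (Fin n))),
      {lam : ℝ | Module.End.HasEigenvalue
        (Matrix.mulVecLin (Matrix.of fun i j =>
          if i ∈ s ∧ j ∈ s then A i j else 0)) lam}).Finite :=
    Set.Finite.biUnion Set.finite_univ fun s _ => Module.End.finite_hasEigenvalue _
  refine hfin.subset ?_
  intro lam hlam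
  obtain ⟨x, hxne, hx0, hpw, hxval⟩ := hlam
  have hxx : 0 < x ⬝ᵥ x := dot_self_pos hxne
  have hQ : x ⬝ᵥ A.mulVec x = lam * (x ⬝ᵥ x) := by
    rw [hxval]; field_simp
  have hcomp := comp_slack A hx0 hQ hpw
  set s : Finset (Fin n) := Finset.univ.filter (fun i => x i ≠ 0) with hs
  set B : Matrix (Fin n) (Fin n) ℝ :=
    Matrix.of (fun i j => if i ∈ s ∧ j ∈ s then A i j else 0) with hB
  have hmem : ∀ i, i ∈ s ↔ x i ≠ 0 := by
    intro i; simp [hs]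
  have hBx : B.mulVec x = lam • x := by
    ext i
    by_cases hi : i ∈ s
    · have : B.mulVec x i = A.mulVec x i := by
        simp only [Matrix.mulVec, dotProduct]
        refine Finset.sum_congr rfl fun j _ => ?_
        by_cases hj : j ∈ s
        · simp [hB, hi, hj]
        · have : x j = 0 := by
            by_contra hxj; exact hj ((hmem j).mpr hxj)
          simp [this]
      rw [this, Pi.smul_apply, smul_eq_mul]
      exact hcomp i ((hx0 i).lt_of_ne (Ne.symm ((hmem i).mp hi)))
    · have hxi : x i = 0 := by
        by_contra hxi; exact hi ((hmem i).mpr hxi)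
      have : B.mulVec x i = 0 := by
        simp only [Matrix.mulVec, dotProduct]
        refine Finset.sum_eq_zero fun j _ => ?_
        simp [hB, hi]
      rw [this, Pi.smul_apply, smul_eq_mul, hxi, mul_zero]
  refine Set.mem_biUnion (Set.mem_univ s) ?_
  exact Module.End.hasEigenvalue_of_hasEigenvector
    ⟨Module.End.mem_eigenspace_iff.mpr (by rw [Matrix.mulVecLin_apply]; exact hBx), hxne⟩

/-- Structure of the two largest elements of a finite set. -/
lemma kth_structure {P : Set ℝ} (hfin : P.Finite) {r1 r2 : ℝ}
    (h1 : r1 ∈ P ∧ {x ∈ P | r1 < x}.ncard = 0)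
    (h2 : r2 ∈ P ∧ {x ∈ P | r2 < x}.ncard = 1) :
    r2 < r1 ∧ (∀ mu ∈ P, mu ≤ r1) ∧ (∀ mu ∈ P, r2 < mu → mu = r1) := by
  have hs1 : {x ∈ P | r1 < x} = ∅ := by
    rw [← Set.ncard_eq_zero (hfin.subset (Set.sep_subset _ _))] at *
    exact h1.2
  have hle1 : ∀ mu ∈ P, mu ≤ r1 := by
    intro mu hmu
    by_contra hcon
    push_neg at hcon
    exact absurd (Set.eq_empty_iff_forall_notMem.mp hs1 mu ⟨hmu, hcon⟩) (fun h => h)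
  obtain ⟨a, ha⟩ := Set.ncard_eq_one.mp h2.2
  have haP : a ∈ P ∧ r2 < a := by
    have : a ∈ {x ∈ P | r2 < x} := ha ▸ rfl
    exact this
  have hr21 : r2 < r1 := lt_of_lt_of_le haP.2 (hle1 a haP.1)
  have har1 : a = r1 := by
    have h1mem : r1 ∈ {x ∈ P | r2 < x} := ⟨h1.1, hr21⟩
    rw [ha] at h1mem
    exact (Set.mem_singleton_iff.mp h1mem).symm
  refine ⟨hr21, hle1, fun mu hmu hlt => ?_⟩
  have : mu ∈ {x ∈ P | r2 < x} := ⟨hmu, hlt⟩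
  rw [ha] at this
  exact har1 ▸ Set.mem_singleton_iff.mp this

/-- indicator vectors give Pareto eigenvalues of J - I -/
lemma top_indicator (hA : ∀ i j, A i j = if i = j then 0 else 1)
    (s : Finset (Fin n)) (hs : s.Nonempty) :
    IsParetoEigenvalue A ((s.card : ℝ) - 1) := by
  classical
  set x : Fin n → ℝ := fun i => if i ∈ s then 1 else 0 with hx
  have hcard1 : 1 ≤ s.card := Finset.card_pos.mpr hs
  have hmv : ∀ i, A.mulVec x i = ((s.erase i).card : ℝ) := by
    intro i
    have hterm : ∀ j, A i j * x j = if j ∈ s.erase i then 1 else 0 := by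
      intro j
      by_cases hj : j ∈ s <;> by_cases hij : j = i <;>
        simp [hx, hA, hj, hij, Finset.mem_erase] <;> tauto
    simp only [Matrix.mulVec, dotProduct, hterm]
    rw [Finset.sum_ite_mem, Finset.univ_inter, Finset.sum_const, nsmul_eq_mul, mul_one]
  have hmv2 : ∀ i ∈ s, A.mulVec x i = (s.card : ℝ) - 1 := by
    intro i hi
    rw [hmv i, Finset.card_erase_of_mem hi, Nat.cast_sub hcard1, Nat.cast_one]
  refine ⟨x, ?_, ?_, ?_, ?_⟩
  · intro h0
    obtain ⟨i, hi⟩ := hs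
    have : x i = 0 := by rw [h0]; rfl
    simp [hx, hi] at this
  · intro i; by_cases hi : i ∈ s <;> simp [hx, hi]
  · intro i
    by_cases hi : i ∈ s
    · rw [hmv2 i hi]; simp [hx, hi]
    · simp only [hx, hi, if_neg hi, mul_zero, hmv i]
      exact le_of_le_of_eq (Nat.cast_nonneg _) (hmv i).symm
  · have hN : x ⬝ᵥ x = (s.card : ℝ) := by
      simp only [dotProduct, hx]
      have : ∀ j, (if j ∈ s then (1:ℝ) else 0) * (if j ∈ s then 1 else 0)
          = if j ∈ s then 1 else 0 := by intro j; by_cases hj : j ∈ s <;> simp [hj]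
      rw [Finset.sum_congr rfl fun j _ => this j, Finset.sum_ite_mem, Finset.univ_inter,
        Finset.sum_const, nsmul_eq_mul, mul_one]
    have hQ : x ⬝ᵥ A.mulVec x = (s.card : ℝ) * ((s.card : ℝ) - 1) := by
      simp only [dotProduct]
      have : ∀ i, x i * A.mulVec x i = if i ∈ s then (s.card : ℝ) - 1 else 0 := by
        intro i
        by_cases hi : i ∈ s
        · rw [hmv2 i hi]; simp [hx, hi]
        · simp [hx, hi]
      rw [Finset.sum_congr rfl fun i _ => this i, Finset.sum_ite_mem, Finset.univ_inter,
        Finset.sum_const, nsmul_eq_mul]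
    rw [hQ, hN]
    have : (s.card : ℝ) ≠ 0 := by positivity
    field_simp


lemma top_char (hA : ∀ i j, A i j = if i = j then 0 else 1) {lam : ℝ}
    (h : IsParetoEigenvalue A lam) :
    ∃ k : ℕ, 1 ≤ k ∧ k ≤ n ∧ lam = (k : ℝ) - 1 := by
  classical
  obtain ⟨x, hxne, hx0, hpw, hval⟩ := h
  have hxx : 0 < x ⬝ᵥ x := dot_self_pos hxne
  have hQ : x ⬝ᵥ A.mulVec x = lam * (x ⬝ᵥ x) := by rw [hval]; field_simp
  have hnn : ∀ i j, 0 ≤ A i j := by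
    intro i j; rw [hA]; by_cases hij : i = j <;> simp [hij]
  have hlam0 : 0 ≤ lam := by
    rw [hval]
    exact div_nonneg (Finset.sum_nonneg fun i _ =>
      mul_nonneg (hx0 i) (mulVec_nonneg A hnn hx0 i)) (dot_self_nonneg x)
  have hcomp := comp_slack A hx0 hQ hpw
  set s : Finset (Fin n) := Finset.univ.filter (fun i => x i ≠ 0) with hs
  have hmem : ∀ i, i ∈ s ↔ x i ≠ 0 := by intro i; simp [hs]
  obtain ⟨i0, hi0⟩ := Function.ne_iff.mp hxne
  have hsne : s.Nonempty := ⟨i0, (hmem i0).mpr hi0⟩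
  set σ : ℝ := ∑ j, x j with hσ
  have hσpos : 0 < σ :=
    Finset.sum_pos' (fun j _ => hx0 j) ⟨i0, Finset.mem_univ i0, (hx0 i0).lt_of_ne (Ne.symm hi0)⟩
  have hmv : ∀ i, A.mulVec x i = σ - x i := by
    intro i
    have hterm : ∀ j, A i j * x j = x j - (if i = j then x j else 0) := by
      intro j; by_cases hij : i = j <;> simp [hA, hij]
    simp only [Matrix.mulVec, dotProduct, hterm]
    rw [Finset.sum_sub_distrib, Finset.sum_ite_eq Finset.univ i (fun j => x j)]
    simp [hσ]
  have hxi : ∀ i ∈ s, x i = σ / (lam + 1) := by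
    intro i hi
    have hpos : 0 < x i := (hx0 i).lt_of_ne (Ne.symm ((hmem i).mp hi))
    have := hcomp i hpos
    rw [hmv i] at this
    have hl1 : 0 < lam + 1 := by linarith
    field_simp
    linarith
  have hσs : σ = ∑ j ∈ s, x j := by
    rw [hσ]
    refine (Finset.sum_subset (Finset.subset_univ s) ?_).symm
    intro j _ hj
    by_contra hxj
    exact hj ((hmem j).mpr hxj)
  have hsum2 : σ = (s.card : ℝ) * (σ / (lam + 1)) := by
    calc σ = ∑ j ∈ s, x j := hσs
    _ = ∑ _j ∈ s, σ / (lam + 1) := Finset.sum_congr rfl hxi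
    _ = (s.card : ℝ) * (σ / (lam + 1)) := by rw [Finset.sum_const, nsmul_eq_mul]
  have hl1 : 0 < lam + 1 := by linarith
  have hcard : (s.card : ℝ) = lam + 1 := by
    rw [mul_div_assoc'] at hsum2
    rw [eq_div_iff hl1.ne'] at hsum2
    have h5 : (lam + 1) * σ = (s.card : ℝ) * σ := by linarith
    exact (mul_right_cancel₀ hσpos.ne' h5).symm
  refine ⟨s.card, Finset.card_pos.mpr hsne, ?_, by rw [hcard]; ring⟩
  simpa using Finset.card_le_univ s

lemma mv_single (i : Fin n) : A.mulVec (ev i) = fun j => A j i := by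
  ext j; unfold ev; rw [Matrix.mulVec_single]; simp

lemma ev_nonneg (i j : Fin n) : 0 ≤ ev i j := by
  unfold ev; rw [Pi.single_apply]; by_cases h : j = i <;> simp [h]

end Aux

set_option maxHeartbeats 1000000 in
theorem stmt11 (n : ℕ) (hn : 3 ≤ n) (G : SimpleGraph (Fin n)) (hG : G.Connected)
    (ρ1 ρ2 : ℝ)
    (hρ1 : IsKthLargest (distParetoSet G) 1 ρ1)
    (hρ2 : IsKthLargest (distParetoSet G) 2 ρ2) :
    ρ1 - ρ2 ≤ ρ2 / ((n : ℝ) - 2) ∧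
    (ρ1 - ρ2 = ρ2 / ((n : ℝ) - 2) ↔ G = ⊤) := by
  classical
  set A : Matrix (Fin n) (Fin n) ℝ := distMatrix G with hAdef
  have hsym : ∀ i j, A i j = A j i := fun i j => by
    simp [hAdef, distMatrix, SimpleGraph.dist_comm]
  have hnn : ∀ i j, 0 ≤ A i j := fun i j => Nat.cast_nonneg _
  have hone : ∀ i j, i ≠ j → (1:ℝ) ≤ A i j := fun i j hij => by
    have h : (1:ℕ) ≤ G.dist i j := hG.pos_dist_of_ne hij
    simp only [hAdef, distMatrix]
    exact_mod_cast h
  have hoff : ∀ i j, i ≠ j → 0 < A i j := fun i j hij => lt_of_lt_of_le one_pos (hone i j hij)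
  have hdiag : ∀ i, A i i = 0 := fun i => by
    simp [hAdef, distMatrix]
  have hn2 : (0:ℝ) < (n:ℝ) - 2 := by
    have : (3:ℝ) ≤ (n:ℝ) := by exact_mod_cast hn
    linarith
  have hnR : (3:ℝ) ≤ (n:ℝ) := by exact_mod_cast hn
  -- structure of the Pareto set
  have hfin : {lam : ℝ | IsParetoEigenvalue A lam}.Finite := pareto_finite A
  have hρ1m : IsParetoEigenvalue A ρ1 := hρ1.1
  have hρ2m : IsParetoEigenvalue A ρ2 := hρ2.1
  obtain ⟨hr21, hle1, huniq⟩ := kth_structure hfin ⟨hρ1m, by simpa [distParetoSet] using hρ1.2⟩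
    ⟨hρ2m, by simpa [distParetoSet] using hρ2.2⟩
  -- a global nonnegative maximizer
  have i0 : Fin n := ⟨0, by omega⟩
  obtain ⟨x, hx0, -, hx1, hxmax⟩ := exists_max A Set.univ ⟨⟨0, by omega⟩, trivial⟩
  set lam : ℝ := x ⬝ᵥ A.mulVec x with hlam
  have hmaxg : ∀ z : Fin n → ℝ, (∀ i, 0 ≤ z i) → z ⬝ᵥ A.mulVec z ≤ lam * (z ⬝ᵥ z) :=
    fun z hz => hxmax z hz (fun i hi => absurd (Set.mem_univ i) hi)
  have hlam_pareto : IsParetoEigenvalue A lam :=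
    ⟨x, max_is_pareto A hsym hnn hx0 (fun i hi => absurd (Set.mem_univ i) hi) hx1 hxmax⟩
  have hρ1lam : ρ1 = lam :=
    le_antisymm (pareto_le_max A hx1 rfl hxmax hρ1m) (hle1 lam hlam_pareto)
  -- positivity of lam
  have hlampos : 0 < lam := by
    have hne01 : (⟨0, by omega⟩ : Fin n) ≠ ⟨1, by omega⟩ := by
      simp [Fin.ext_iff]
    set a : Fin n := ⟨0, by omega⟩
    set b : Fin n := ⟨1, by omega⟩
    have hQa : (ev a) ⬝ᵥ A.mulVec (ev a) = A a a := by
      rw [mv_single]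
      simp [ev, single_dotProduct]
    have hQz := quad_expand A hsym (ev a) b 1
    have hNz := norm_expand (ev a) b 1
    have heab : ev a b = 0 := by
      unfold ev; rw [Pi.single_apply, if_neg (Ne.symm hne01)]
    have hmva : A.mulVec (ev a) b = A b a := by rw [mv_single]
    have hz0 : ∀ i, 0 ≤ (ev a + (1:ℝ) • ev b) i := fun i => by
      simp only [Pi.add_apply, Pi.smul_apply, smul_eq_mul, one_mul]
      exact add_nonneg (ev_nonneg a i) (ev_nonneg b i)
    have hNa : (ev a) ⬝ᵥ (ev a) = 1 := by
      simp [ev, single_dotProduct, Pi.single_apply]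
    have hle := hmaxg _ hz0
    rw [hQz, hNz, hQa, hmva, heab, hdiag a, hdiag b, hNa] at hle
    have h1ab : (1:ℝ) ≤ A b a := hone b a (Ne.symm hne01)
    nlinarith
  -- full support and eigenvector equation
  have hsupp : ∀ v, 0 < x v := full_support A hsym hoff hx0 hx1 hlam.symm hmaxg
  have hQx : x ⬝ᵥ A.mulVec x = lam * (x ⬝ᵥ x) := by rw [hx1, mul_one]
  have hpwx : ∀ i, lam * x i ≤ A.mulVec x i :=
    max_pointwise A hsym hnn hx0 (fun i hi => absurd (Set.mem_univ i) hi) hQx hxmax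
  have heig : ∀ i, A.mulVec x i = lam * x i :=
    fun i => comp_slack A hx0 hQx hpwx i (hsupp i)
  -- minimal coordinate
  obtain ⟨v, -, hvmin'⟩ := Finset.exists_min_image Finset.univ x ⟨⟨0, by omega⟩, Finset.mem_univ _⟩
  have hvmin : ∀ i, x v ≤ x i := fun i => hvmin' i (Finset.mem_univ i)
  set t : ℝ := (x v)^2 with ht
  have ht0 : 0 < t := pow_pos (hsupp v) 2
  have hsumsq : ∑ i, (x i)^2 = 1 := by
    rw [← hx1]; simp [dotProduct, sq]
  have htn : (n:ℝ) * t ≤ 1 := by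
    have h1 : ∑ _i : Fin n, t ≤ ∑ i, (x i)^2 :=
      Finset.sum_le_sum fun i _ => pow_le_pow_left₀ (hsupp v).le (hvmin i) 2
    rw [hsumsq] at h1
    simpa [Finset.sum_const, Finset.card_univ, nsmul_eq_mul] using h1
  have h1t : 0 < 1 - t := by nlinarith
  -- the restricted maximizer
  obtain ⟨u, hu⟩ := Fintype.exists_ne_of_one_lt_card (by simp; omega) v
  obtain ⟨y, hy0, hyS, hy1, hymax⟩ := exists_max A ({v}ᶜ : Set (Fin n)) ⟨u, by simp [hu]⟩
  set mu : ℝ := y ⬝ᵥ A.mulVec y with hmu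
  have hmu_pareto : IsParetoEigenvalue A mu :=
    ⟨y, max_is_pareto A hsym hnn hy0 hyS hy1 hymax⟩
  have hmune : mu ≠ ρ1 := by
    intro he
    have hQy : y ⬝ᵥ A.mulVec y = lam := (hmu.symm.trans he).trans hρ1lam
    have := full_support A hsym hoff hy0 hy1 hQy hmaxg v
    have hyv : y v = 0 := hyS v (by simp)
    rw [hyv] at this
    exact lt_irrefl 0 this
  have hmule : mu ≤ ρ2 := by
    by_contra hcon
    push_neg at hcon
    exact hmune (huniq mu hmu_pareto hcon)
  -- the test vector
  set z0 : Fin n → ℝ := x + (-(x v)) • ev v with hz0def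
  have hz00 : ∀ i, 0 ≤ z0 i := by
    intro i
    simp only [hz0def, Pi.add_apply, Pi.smul_apply, smul_eq_mul, ev, Pi.single_apply]
    by_cases hi : i = v
    · simp [hi]
    · simp [hi]; exact (hsupp i).le
  have hz0S : ∀ i ∉ ({v}ᶜ : Set (Fin n)), z0 i = 0 := by
    intro i hi
    have : i = v := by simpa using hi
    subst this
    simp [hz0def, ev, Pi.single_apply]
  have hQz0 : z0 ⬝ᵥ A.mulVec z0 = lam * (1 - 2*t) := by
    rw [hz0def, quad_expand A hsym, heig v, hdiag v, ← hlam, ht]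
    ring
  have hNz0 : z0 ⬝ᵥ z0 = 1 - t := by
    rw [hz0def, norm_expand, hx1, ht]; ring
  have hkey : lam * (1 - 2*t) ≤ mu * (1 - t) := by
    have := hymax z0 hz00 hz0S
    rwa [hQz0, hNz0] at this
  clear_value lam mu
  -- main inequality
  have hineq : ρ1 * ((n:ℝ) - 2) ≤ ρ2 * ((n:ℝ) - 1) := by
    rw [hρ1lam]
    have e1 : lam * (1 - 2*t) * ((n:ℝ) - 1) ≤ mu * (1 - t) * ((n:ℝ) - 1) :=
      mul_le_mul_of_nonneg_right hkey (by linarith)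
    have e2 : mu * (1 - t) * ((n:ℝ) - 1) ≤ ρ2 * (1 - t) * ((n:ℝ) - 1) := by
      have : mu * ((1 - t) * ((n:ℝ) - 1)) ≤ ρ2 * ((1 - t) * ((n:ℝ) - 1)) :=
        mul_le_mul_of_nonneg_right hmule (by nlinarith)
      nlinarith [this]
    have e3 : lam * ((n:ℝ) - 2) * (1 - t) ≤ lam * (1 - 2*t) * ((n:ℝ) - 1) := by
      nlinarith [hlampos, htn]
    have e4 : lam * ((n:ℝ) - 2) * (1 - t) ≤ ρ2 * ((n:ℝ) - 1) * (1 - t) := by nlinarith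
    exact le_of_mul_le_mul_right (by nlinarith [e4]) h1t
  constructor
  · rw [le_div_iff₀ hn2]
    nlinarith [hineq]
  constructor
  · -- equality implies complete
    intro heq
    rw [eq_div_iff hn2.ne'] at heq
    have heq2 : lam * ((n:ℝ) - 2) = ρ2 * ((n:ℝ) - 1) := by
      rw [← hρ1lam]; linear_combination heq
    -- t = 1/n
    have hnt : 1 ≤ (n:ℝ) * t := by
      nlinarith [hkey, hmule, h1t, hlampos, heq2]
    have hnteq : (n:ℝ) * t = 1 := le_antisymm htn hnt
    -- x is constant
    have hconst : ∀ i, x i = x v := by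
      intro i
      have hsum0 : ∑ j, ((x j)^2 - t) = 0 := by
        rw [Finset.sum_sub_distrib, hsumsq]
        simp [Finset.sum_const, Finset.card_univ, nsmul_eq_mul]
        linarith [hnteq]
      have hterm : ∀ j ∈ Finset.univ, 0 ≤ (x j)^2 - t := fun j _ => by
        have := pow_le_pow_left₀ (hsupp v).le (hvmin j) 2
        rw [← ht] at this; linarith
      have := (Finset.sum_eq_zero_iff_of_nonneg hterm).mp hsum0 i (Finset.mem_univ i)
      have hsq : (x i)^2 = (x v)^2 := by rw [ht] at this; linarith
      nlinarith [hvmin i, hsupp v, hsupp i]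
    -- all row sums equal lam
    have hrow : ∀ i, ∑ j, A i j = lam := by
      intro i
      have h1 := heig i
      have h2 : A.mulVec x i = (∑ j, A i j) * x v := by
        simp only [Matrix.mulVec, dotProduct]
        rw [Finset.sum_mul]
        exact Finset.sum_congr rfl fun j _ => by rw [hconst j]
      rw [h2, hconst i] at h1
      exact mul_right_cancel₀ (hsupp v).ne' h1
    -- equality in the restricted problem
    have hmueq : mu * (1 - t) = lam * (1 - 2*t) := by
      have e5 : mu * (1 - t) * ((n:ℝ) - 1) ≤ ρ2 * (1 - t) * ((n:ℝ) - 1) := by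
        have : mu * ((1 - t) * ((n:ℝ) - 1)) ≤ ρ2 * ((1 - t) * ((n:ℝ) - 1)) :=
          mul_le_mul_of_nonneg_right hmule (by nlinarith)
        nlinarith [this]
      have e6 : ρ2 * (1 - t) * ((n:ℝ) - 1) = lam * (1 - 2*t) * ((n:ℝ) - 1) := by
        nlinarith [heq2, hnteq]
      have : mu * (1 - t) ≤ lam * (1 - 2*t) := by
        have h7 : mu * (1 - t) * ((n:ℝ) - 1) ≤ lam * (1 - 2*t) * ((n:ℝ) - 1) := by
          rw [← e6]; exact e5
        have hn1 : (0:ℝ) < (n:ℝ) - 1 := by linarith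
        exact le_of_mul_le_mul_right h7 hn1
      linarith [hkey]
    have hQz0mu : z0 ⬝ᵥ A.mulVec z0 = mu * (z0 ⬝ᵥ z0) := by
      rw [hQz0, hNz0, hmueq]
    -- complementarity for z0
    have hmaxmu : ∀ z : Fin n → ℝ, (∀ i, 0 ≤ z i) → (∀ i ∉ ({v}ᶜ : Set (Fin n)), z i = 0) →
        z ⬝ᵥ A.mulVec z ≤ mu * (z ⬝ᵥ z) := fun z hz hzS => hymax z hz hzS
    have hpwz := max_pointwise A hsym hnn hz00 hz0S hQz0mu hmaxmu
    have hcompz := comp_slack A hz00 hQz0mu hpwz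
    -- distances to v are all equal to lam - mu
    have hdistv : ∀ i, i ≠ v → A i v = lam - mu := by
      intro i hiv
      have hz0i : z0 i = x v := by
        simp only [hz0def, Pi.add_apply, Pi.smul_apply, smul_eq_mul, ev, Pi.single_apply]
        rw [if_neg hiv, mul_zero, add_zero, hconst i]
      have hz0pos : 0 < z0 i := by rw [hz0i]; exact hsupp v
      have hci := hcompz i hz0pos
      have hmvz : A.mulVec z0 i = lam * x v - A i v * x v := by
        rw [hz0def, Matrix.mulVec_add, Matrix.mulVec_smul, mv_single]
        simp only [Pi.add_apply, Pi.smul_apply, smul_eq_mul]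
        rw [heig i, hconst i, hsym i v]
        ring
      rw [hmvz, hz0i] at hci
      have : (lam - A i v) * x v = mu * x v := by linarith [hci]
      have := mul_right_cancel₀ (hsupp v).ne' this
      linarith
    -- v has a neighbor, so lam - mu = 1
    have hadj : ∃ w, G.Adj v w := by
      obtain ⟨p⟩ := hG.preconnected v u
      cases p with
      | nil => exact absurd rfl (Ne.symm hu)
      | cons h q => exact ⟨_, h⟩
    obtain ⟨w, hw⟩ := hadj
    have hwv : w ≠ v := hw.ne'
    have hAwv : A w v = 1 := by
      have : G.dist v w = 1 := SimpleGraph.dist_eq_one_iff_adj.mpr hw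
      have h2 : G.dist w v = 1 := by rw [SimpleGraph.dist_comm]; exact this
      simp [hAdef, distMatrix, h2]
    have hlm1 : lam - mu = 1 := by rw [← hdistv w hwv]; exact hAwv
    have hdistv1 : ∀ i, i ≠ v → A i v = 1 := fun i hiv => by rw [hdistv i hiv, hlm1]
    -- lam = n - 1
    have hlamn : lam = (n:ℝ) - 1 := by
      have h1 := hrow v
      have h2 : ∑ j, A v j = ∑ j, (if j = v then (0:ℝ) else 1) := by
        refine Finset.sum_congr rfl fun j _ => ?_
        by_cases hj : j = v
        · rw [hj, hdiag v]; simp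
        · rw [hsym v j, hdistv1 j hj, if_neg hj]
      have h3 : ∑ j, (if j = v then (0:ℝ) else 1) = (n:ℝ) - 1 := by
        have : ∑ j : Fin n, (if j = v then (0:ℝ) else 1)
            = ∑ j : Fin n, ((1:ℝ) - if j = v then 1 else 0) := by
          refine Finset.sum_congr rfl fun j _ => ?_
          by_cases hj : j = v <;> simp [hj]
        rw [this, Finset.sum_sub_distrib, Finset.sum_ite_eq' Finset.univ v (fun _ => (1:ℝ))]
        simp [Finset.card_univ]
      rw [h2, h3] at h1
      exact h1.symm
    -- all off-diagonal distances are 1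
    have halloff : ∀ i j, i ≠ j → A i j = 1 := by
      intro i j hij
      have h1 := hrow i
      have h2 : ∑ k, A i k = A i i + ∑ k ∈ Finset.univ.erase i, A i k :=
        (Finset.add_sum_erase Finset.univ (fun k => A i k) (Finset.mem_univ i)).symm
      rw [hdiag i, zero_add] at h2
      have hcard : ((Finset.univ.erase i).card : ℝ) = (n:ℝ) - 1 := by
        rw [Finset.card_erase_of_mem (Finset.mem_univ i), Finset.card_univ]
        simp
        rw [Nat.cast_sub (by omega)]
        simp
      have hsum0 : ∑ k ∈ Finset.univ.erase i, (A i k - 1) = 0 := by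
        rw [Finset.sum_sub_distrib, Finset.sum_const, nsmul_eq_mul, mul_one, hcard, ← h2, h1,
          hlamn]
        ring
      have hterm : ∀ k ∈ Finset.univ.erase i, 0 ≤ A i k - 1 := fun k hk => by
        have : k ≠ i := (Finset.mem_erase.mp hk).1
        linarith [hone i k (Ne.symm this)]
      have := (Finset.sum_eq_zero_iff_of_nonneg hterm).mp hsum0 j
        (Finset.mem_erase.mpr ⟨Ne.symm hij, Finset.mem_univ j⟩)
      linarith
    -- conclude G = ⊤
    ext i j
    simp only [SimpleGraph.top_adj]
    constructor
    · exact fun h => h.ne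
    · intro hij
      have h1 : A i j = 1 := halloff i j hij
      have h2 : G.dist i j = 1 := by
        have : ((G.dist i j : ℕ) : ℝ) = 1 := h1
        exact_mod_cast this
      exact SimpleGraph.dist_eq_one_iff_adj.mp h2
  · -- complete implies equality
    intro hGt
    have hA : ∀ i j, A i j = if i = j then 0 else 1 := by
      intro i j
      by_cases hij : i = j
      · rw [hij, if_pos rfl]; exact hdiag j
      · rw [if_neg hij]
        simp only [hAdef, distMatrix, hGt]
        rw [SimpleGraph.dist_top_of_ne hij]
        simp
    have hn1mem : IsParetoEigenvalue A ((n:ℝ) - 1) := by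
      have h := top_indicator A hA Finset.univ ⟨⟨0, by omega⟩, Finset.mem_univ _⟩
      simpa [Finset.card_univ] using h
    have hn2mem : IsParetoEigenvalue A ((n:ℝ) - 2) := by
      have hmem : (⟨0, by omega⟩ : Fin n) ∈ Finset.univ := Finset.mem_univ _
      have hcard : (Finset.univ.erase (⟨0, by omega⟩ : Fin n)).card = n - 1 := by
        rw [Finset.card_erase_of_mem hmem, Finset.card_univ]; simp
      have hne : (Finset.univ.erase (⟨0, by omega⟩ : Fin n)).Nonempty := by
        rw [← Finset.card_pos, hcard]; omega
      have h := top_indicator A hA _ hne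
      rw [hcard] at h
      have : ((n - 1 : ℕ) : ℝ) - 1 = (n:ℝ) - 2 := by
        rw [Nat.cast_sub (by omega)]; push_cast; ring
      rwa [this] at h
    have hρ1n : ρ1 = (n:ℝ) - 1 := by
      refine le_antisymm ?_ (hle1 _ hn1mem)
      obtain ⟨k, hk1, hkn, hkval⟩ := top_char A hA hρ1m
      rw [hkval]
      have : (k:ℝ) ≤ (n:ℝ) := by exact_mod_cast hkn
      linarith
    have hρ2n : ρ2 = (n:ℝ) - 2 := by
      refine le_antisymm ?_ ?_
      · obtain ⟨k, hk1, hkn, hkval⟩ := top_char A hA hρ2m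
        have hklt : k < n := by
          by_contra hcon
          push_neg at hcon
          have : k = n := le_antisymm hkn hcon
          rw [hkval, this] at hr21
          rw [hρ1n] at hr21
          exact lt_irrefl _ hr21
        rw [hkval]
        have : (k:ℝ) ≤ (n:ℝ) - 1 := by
          have : k ≤ n - 1 := by omega
          have h2 : ((k:ℕ):ℝ) ≤ ((n-1:ℕ):ℝ) := by exact_mod_cast this
          rw [Nat.cast_sub (by omega)] at h2
          simpa using h2
        linarith
      · by_contra hcon
        push_neg at hcon
        have := huniq _ hn2mem hcon
        rw [hρ1n] at this
        linarith
    rw [hρ1n, hρ2n, div_self hn2.ne']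
    ring
end

section
/- For any connected graph G with at least 3 vertices, the smallest three distance Pareto eigenvalues of G are 0, 1 and 2; that is, μ₁(G) = 0, μ₂(G) = 1 and μ₃(G) = 2. -/
open Matrix SimpleGraph

-- indicator-based membership lemma
lemma pareto_of_indicator {n : ℕ} (G : SimpleGraph (Fin n)) (T : Finset (Fin n))
    (hT : T.Nonempty) (lam : ℝ) (_hlam : 0 ≤ lam)
    (h1 : ∀ i ∈ T, ∑ j ∈ T, distMatrix G i j = lam) :
    IsParetoEigenvalue (distMatrix G) lam := by
  set A := distMatrix G with hA
  have hAnn : ∀ i j, (0:ℝ) ≤ A i j := fun i j => Nat.cast_nonneg _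
  refine ⟨fun j => if j ∈ T then 1 else 0, ?_, ?_, ?_, ?_⟩
  · obtain ⟨i, hi⟩ := hT
    intro h
    have := congrFun h i
    simp [hi] at this
  · intro i; dsimp only; split <;> norm_num
  · intro i
    have hmv : A.mulVec (fun j => if j ∈ T then (1:ℝ) else 0) i = ∑ j ∈ T, A i j := by
      simp [Matrix.mulVec, dotProduct, mul_ite, mul_one, mul_zero,
        Finset.sum_ite_mem, Finset.univ_inter]
    rw [hmv]
    dsimp only
    split
    · rw [mul_one, h1 i (by assumption)]
    · rw [mul_zero]
      exact Finset.sum_nonneg fun j _ => hAnn i j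
  · have hmv : ∀ i, A.mulVec (fun j => if j ∈ T then (1:ℝ) else 0) i = ∑ j ∈ T, A i j := by
      intro i
      simp [Matrix.mulVec, dotProduct, mul_ite, mul_one, mul_zero,
        Finset.sum_ite_mem, Finset.univ_inter]
    have hd : ∀ (y : Fin n → ℝ), (fun j => if j ∈ T then (1:ℝ) else 0) ⬝ᵥ y = ∑ j ∈ T, y j := by
      intro y
      simp [dotProduct, ite_mul, one_mul, zero_mul, Finset.sum_ite_mem,
        Finset.univ_inter]
    rw [hd, hd]
    have h2 : ∑ j ∈ T, (A.mulVec (fun j => if j ∈ T then (1:ℝ) else 0)) j = T.card * lam := by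
      rw [Finset.sum_congr rfl fun j hj => by rw [hmv j, h1 j hj]]
      simp [mul_comm]
    have h3 : ∑ j ∈ T, (if j ∈ T then (1:ℝ) else 0) = T.card := by
      simp
    rw [h2, h3]
    have hc : (0:ℝ) < T.card := by
      exact_mod_cast Finset.card_pos.mpr hT
    field_simp

lemma pareto_classify {n : ℕ} (G : SimpleGraph (Fin n)) (hG : G.Connected) (lam : ℝ)
    (h : lam ∈ distParetoSet G) : lam = 0 ∨ lam = 1 ∨ 2 ≤ lam := by
  classical
  obtain ⟨x, hx0, hxnn, hineq, hlam⟩ := h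
  set A := distMatrix G with hA
  have hAnn : ∀ i j, (0:ℝ) ≤ A i j := fun i j => Nat.cast_nonneg _
  have hAd : ∀ i, A i i = 0 := by intro i; simp [hA, distMatrix]
  have hA1 : ∀ i j, i ≠ j → (1:ℝ) ≤ A i j := by
    intro i j hij
    show (1:ℝ) ≤ (G.dist i j : ℝ)
    exact Nat.one_le_cast.mpr (hG.pos_dist_of_ne hij)
  have hAsymm : ∀ i j, A i j = A j i := by
    intro i j; simp [hA, distMatrix, SimpleGraph.dist_comm]
  have hmv : ∀ i, A.mulVec x i = ∑ j, A i j * x j := by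
    intro i; simp [Matrix.mulVec, dotProduct]
  -- positivity of x ⬝ᵥ x
  obtain ⟨i0, hi0⟩ := Function.ne_iff.mp hx0
  have hxi0 : 0 < x i0 := lt_of_le_of_ne (hxnn i0) (Ne.symm hi0)
  have hxx : 0 < x ⬝ᵥ x := by
    have : (0:ℝ) < x i0 * x i0 := mul_pos hxi0 hxi0
    refine lt_of_lt_of_le this ?_
    exact Finset.single_le_sum (fun j _ => mul_nonneg (hxnn j) (hxnn j)) (Finset.mem_univ i0)
  have hnum : x ⬝ᵥ A.mulVec x = lam * (x ⬝ᵥ x) := by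
    rw [hlam]; field_simp
  -- support equality
  have hsupp : ∀ i, 0 < x i → A.mulVec x i = lam * x i := by
    have hsum : ∑ i, x i * (A.mulVec x i - lam * x i) = 0 := by
      have e1 : ∑ i, x i * (A.mulVec x i - lam * x i)
          = (∑ i, x i * A.mulVec x i) - lam * ∑ i, x i * x i := by
        rw [Finset.sum_congr rfl (fun i (_ : i ∈ Finset.univ) =>
          (by ring : x i * (A.mulVec x i - lam * x i)
            = x i * A.mulVec x i - lam * (x i * x i))),
          Finset.sum_sub_distrib, Finset.mul_sum]
      have e2 : x ⬝ᵥ A.mulVec x = ∑ i, x i * A.mulVec x i := rfl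
      have e3 : x ⬝ᵥ x = ∑ i, x i * x i := rfl
      rw [e1, ← e2, ← e3, hnum]; ring
    intro i hi
    have h0 : x i * (A.mulVec x i - lam * x i) = 0 := by
      have := (Finset.sum_eq_zero_iff_of_nonneg
        (fun j _ => mul_nonneg (hxnn j) (sub_nonneg.mpr (hineq j)))).mp hsum i
        (Finset.mem_univ i)
      exact this
    rcases mul_eq_zero.mp h0 with h | h
    · exact absurd h (ne_of_gt hi)
    · linarith [sub_eq_zero.mp h]
  set S : Finset (Fin n) := Finset.univ.filter (fun i => 0 < x i) with hSdef
  have hSmem : ∀ i, i ∈ S ↔ 0 < x i := by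
    intro i; simp [hSdef]
  have hxS : ∀ i, i ∉ S → x i = 0 := by
    intro i hi
    have := (hSmem i).not.mp hi
    push_neg at this
    linarith [hxnn i]
  have hSne : S.Nonempty := ⟨i0, (hSmem i0).mpr hxi0⟩
  -- restrict sums to S
  have hrow : ∀ i, A.mulVec x i = ∑ j ∈ S, A i j * x j := by
    intro i
    rw [hmv i]
    symm
    apply Finset.sum_subset (Finset.subset_univ S)
    intro j _ hj
    rw [hxS j hj, mul_zero]
  rcases Nat.lt_or_ge S.card 2 with hc | hc
  · -- card = 1
    have hc1 : S.card = 1 := le_antisymm (by omega) (Finset.card_pos.mpr hSne)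
    obtain ⟨a, ha⟩ := Finset.card_eq_one.mp hc1
    left
    have : x ⬝ᵥ A.mulVec x = 0 := by
      rw [dotProduct]
      apply Finset.sum_eq_zero
      intro i _
      by_cases hiS : i ∈ S
      · have hia : i = a := by rwa [ha, Finset.mem_singleton] at hiS
        rw [hrow i, ha, Finset.sum_singleton, hia, hAd, zero_mul, mul_zero]
      · rw [hxS i hiS, zero_mul]
    rw [hlam, this, zero_div]
  · -- card ≥ 2
    set s := ∑ j ∈ S, x j with hsdef
    have hs : 0 < s := Finset.sum_pos (fun j hj => (hSmem j).mp hj) hSne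
    have key : ∀ i ∈ S, s ≤ (lam + 1) * x i := by
      intro i hiS
      have h1 : lam * x i = ∑ j ∈ S, A i j * x j := by
        rw [← hrow i, hsupp i ((hSmem i).mp hiS)]
      have h2 : ∑ j ∈ S.erase i, x j ≤ ∑ j ∈ S.erase i, A i j * x j := by
        apply Finset.sum_le_sum
        intro j hj
        have hji : j ≠ i := Finset.ne_of_mem_erase hj
        have := hA1 i j (Ne.symm hji)
        nlinarith [hxnn j]
      have h3 : ∑ j ∈ S.erase i, A i j * x j ≤ ∑ j ∈ S, A i j * x j := by
        apply Finset.sum_le_sum_of_subset_of_nonneg (Finset.erase_subset i S)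
        intro j _ _
        exact mul_nonneg (hAnn i j) (hxnn j)
      have h4 : ∑ j ∈ S.erase i, x j = s - x i := by
        rw [hsdef]
        exact Finset.sum_erase_eq_sub hiS
      have := h4 ▸ (h2.trans h3)
      rw [← h1] at this
      nlinarith
    have hsum : (S.card : ℝ) * s ≤ (lam + 1) * s := by
      calc (S.card : ℝ) * s = ∑ _i ∈ S, s := by rw [Finset.sum_const, nsmul_eq_mul]
        _ ≤ ∑ i ∈ S, (lam + 1) * x i := Finset.sum_le_sum key
        _ = (lam + 1) * s := by rw [← Finset.mul_sum]
    have hlamlb : (S.card : ℝ) - 1 ≤ lam := by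
      have := le_of_mul_le_mul_right hsum hs
      linarith
    rcases Nat.lt_or_ge S.card 3 with hc3 | hc3
    · -- card = 2
      have hc2 : S.card = 2 := by omega
      obtain ⟨a, b, hab, hS2⟩ := Finset.card_eq_two.mp hc2
      have hxa : 0 < x a := (hSmem a).mp (by rw [hS2]; simp)
      have hxb : 0 < x b := (hSmem b).mp (by rw [hS2]; simp)
      have ea : lam * x a = A a b * x b := by
        rw [← hsupp a hxa, hrow a, hS2, Finset.sum_pair hab, hAd, zero_mul, zero_add]
      have eb : lam * x b = A a b * x a := by
        rw [← hsupp b hxb, hrow b, hS2, Finset.sum_pair hab, hAd, zero_mul, add_zero,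
          hAsymm b a]
      have hdab : (1:ℝ) ≤ A a b := hA1 a b hab
      have hsq : lam ^ 2 = (A a b) ^ 2 := by
        have h := congrArg₂ (· * ·) ea eb
        have h : lam * x a * (lam * x b) = A a b * x b * (A a b * x a) := h
        have hxab : 0 < x a * x b := mul_pos hxa hxb
        nlinarith
      have hlameq : lam = A a b := by nlinarith
      rcases Nat.lt_or_ge (G.dist a b) 2 with hd | hd
      · have : G.dist a b = 1 := by
          have := hG.pos_dist_of_ne hab; omega
        right; left
        rw [hlameq, hA, distMatrix]; exact_mod_cast congrArg Nat.cast this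
      · right; right
        rw [hlameq]
        have : (2:ℝ) ≤ (G.dist a b : ℝ) := by exact_mod_cast hd
        exact this
    · right; right
      have : (3:ℝ) ≤ (S.card : ℝ) := by exact_mod_cast hc3
      linarith

lemma zero_mem_pareto {n : ℕ} (hn : 3 ≤ n) (G : SimpleGraph (Fin n)) :
    (0:ℝ) ∈ distParetoSet G := by
  have h0 : 0 < n := by omega
  refine pareto_of_indicator G {⟨0, h0⟩} ⟨_, Finset.mem_singleton_self _⟩ 0 le_rfl ?_
  intro i hi
  rw [Finset.mem_singleton] at hi
  subst hi
  rw [Finset.sum_singleton]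
  simp [distMatrix]

lemma one_mem_pareto {n : ℕ} (hn : 3 ≤ n) (G : SimpleGraph (Fin n)) (hG : G.Connected) :
    (1:ℝ) ∈ distParetoSet G := by
  -- find an edge
  have h0 : 0 < n := by omega
  have h1 : 1 < n := by omega
  have hne : (⟨0, h0⟩ : Fin n) ≠ ⟨1, h1⟩ := by simp
  obtain ⟨p⟩ := hG.preconnected ⟨0, h0⟩ ⟨1, h1⟩
  obtain ⟨a, b, hab⟩ : ∃ a b : Fin n, G.Adj a b := by
    cases p with
    | cons h q => exact ⟨_, _, h⟩
  have habne : a ≠ b := G.ne_of_adj hab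
  refine pareto_of_indicator G {a, b} ⟨a, by simp⟩ 1 zero_le_one ?_
  have hd : G.dist a b = 1 := SimpleGraph.dist_eq_one_iff_adj.mpr hab
  have hd' : G.dist b a = 1 := by rwa [SimpleGraph.dist_comm]
  intro i hi
  rw [Finset.sum_pair habne]
  rcases Finset.mem_insert.mp hi with h | h
  · rw [h]; simp [distMatrix, hd]
  · rw [Finset.mem_singleton] at h; rw [h]; simp [distMatrix, hd']

lemma exists_cherry {n : ℕ} (hn : 3 ≤ n) (G : SimpleGraph (Fin n)) (hG : G.Connected) :
    ∃ v a b : Fin n, a ≠ b ∧ G.Adj v a ∧ G.Adj v b := by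
  have h0 : 0 < n := by omega
  have h1 : 1 < n := by omega
  have h2 : 2 < n := by omega
  set v0 : Fin n := ⟨0, h0⟩
  by_cases hall : ∀ w : Fin n, w ≠ v0 → G.Adj v0 w
  · exact ⟨v0, ⟨1, h1⟩, ⟨2, h2⟩, by simp,
      hall ⟨1, h1⟩ (by simp [v0]), hall ⟨2, h2⟩ (by simp [v0])⟩
  · push_neg at hall
    obtain ⟨w, hwne, hwnadj⟩ := hall
    obtain ⟨p, hp, -⟩ := hG.exists_path_of_dist v0 w
    cases p with
    | nil => exact absurd rfl hwne.symm
    | cons h q =>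
      rename_i c
      cases q with
      | nil => exact absurd h hwnadj
      | cons h2 r =>
        rename_i d
        have hnd : v0 ≠ d := by
          have := hp.support_nodup
          simp only [SimpleGraph.Walk.support_cons, List.nodup_cons, List.mem_cons] at this
          have hd := r.start_mem_support
          intro he
          rw [he] at this
          tauto
        exact ⟨c, v0, d, hnd, h.symm, h2⟩

lemma two_mem_pareto {n : ℕ} (hn : 3 ≤ n) (G : SimpleGraph (Fin n)) (hG : G.Connected) :
    (2:ℝ) ∈ distParetoSet G := by
  obtain ⟨v, a, b, hab, hva, hvb⟩ := exists_cherry hn G hG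
  by_cases hadj : G.Adj a b
  · -- triangle {v, a, b}
    have hvna : v ≠ a := G.ne_of_adj hva
    have hvnb : v ≠ b := G.ne_of_adj hvb
    refine pareto_of_indicator G {v, a, b} ⟨v, by simp⟩ 2 (by norm_num) ?_
    have hT : ({v, a, b} : Finset (Fin n)) = insert v {a, b} := rfl
    intro i hi
    have hsum : ∀ i, ∑ j ∈ ({v, a, b} : Finset (Fin n)), distMatrix G i j
        = distMatrix G i v + distMatrix G i a + distMatrix G i b := by
      intro i
      rw [hT, Finset.sum_insert (by simp [hvna, hvnb]), Finset.sum_pair hab]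
      ring
    have e1 : ∀ u w : Fin n, G.Adj u w → distMatrix G u w = 1 := by
      intro u w h; simp [distMatrix, SimpleGraph.dist_eq_one_iff_adj.mpr h]
    have e0 : ∀ u : Fin n, distMatrix G u u = 0 := by
      intro u; simp [distMatrix]
    rw [hsum]
    simp only [hT, Finset.mem_insert, Finset.mem_singleton] at hi
    rcases hi with h | h | h <;> rw [h]
    · rw [e0, e1 _ _ hva, e1 _ _ hvb]; ring
    · rw [e1 _ _ hva.symm, e0, e1 _ _ hadj]; ring
    · rw [e1 _ _ hvb.symm, e1 _ _ hadj.symm, e0]; ring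
  · -- dist a b = 2
    have hd2 : G.dist a b = 2 := by
      have hle : G.dist a b ≤ 2 := by
        have : (SimpleGraph.Walk.cons hva.symm (SimpleGraph.Walk.cons hvb
          SimpleGraph.Walk.nil)).length = 2 := rfl
        exact this ▸ SimpleGraph.dist_le _
      have hpos : 0 < G.dist a b := hG.pos_dist_of_ne hab
      have hne1 : G.dist a b ≠ 1 := fun h => hadj (SimpleGraph.dist_eq_one_iff_adj.mp h)
      omega
    refine pareto_of_indicator G {a, b} ⟨a, by simp⟩ 2 (by norm_num) ?_
    intro i hi
    rw [Finset.sum_pair hab]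
    rcases Finset.mem_insert.mp hi with h | h
    · rw [h]; simp [distMatrix, hd2]
    · rw [Finset.mem_singleton] at h; rw [h]
      have : G.dist b a = 2 := by rwa [SimpleGraph.dist_comm]
      simp [distMatrix, this]


theorem stmt12 (n : ℕ) (hn : 3 ≤ n) (G : SimpleGraph (Fin n)) (hG : G.Connected) :
    IsKthSmallest (distParetoSet G) 1 0 ∧
    IsKthSmallest (distParetoSet G) 2 1 ∧
    IsKthSmallest (distParetoSet G) 3 2 := by
  have h0 := zero_mem_pareto hn G
  have h1 := one_mem_pareto hn G hG
  have h2 := two_mem_pareto hn G hG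
  have hcl := pareto_classify G hG
  refine ⟨⟨h0, ?_⟩, ⟨h1, ?_⟩, ⟨h2, ?_⟩⟩
  · have he : {x ∈ distParetoSet G | x < 0} = ∅ := by
      ext y
      simp only [Set.mem_setOf_eq, Set.mem_empty_iff_false, iff_false, not_and]
      intro hy hy0
      rcases hcl y hy with rfl | rfl | h <;> linarith
    rw [he]
    simp
  · have he : {x ∈ distParetoSet G | x < 1} = {0} := by
      ext y
      simp only [Set.mem_setOf_eq, Set.mem_singleton_iff]
      constructor
      · rintro ⟨hy, hy1⟩
        rcases hcl y hy with rfl | rfl | h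
        · rfl
        · linarith
        · linarith
      · rintro rfl
        exact ⟨h0, by norm_num⟩
    rw [he]
    simp
  · have he : {x ∈ distParetoSet G | x < 2} = {0, 1} := by
      ext y
      simp only [Set.mem_setOf_eq, Set.mem_insert_iff, Set.mem_singleton_iff]
      constructor
      · rintro ⟨hy, hy2⟩
        rcases hcl y hy with rfl | rfl | h
        · exact Or.inl rfl
        · exact Or.inr rfl
        · linarith
      · rintro (rfl | rfl)
        · exact ⟨h0, by norm_num⟩
        · exact ⟨h1, by norm_num⟩
    rw [he, Set.ncard_pair (by norm_num : (0:ℝ) ≠ 1)]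
end

section
/- If G is a connected graph that is not complete (hence has at least 3 vertices), then the fourth smallest distance Pareto eigenvalue of G is μ₄(G) = 1 + √3. -/
open Matrix SimpleGraph

namespace Stmt13Aux

variable {n : ℕ} {G : SimpleGraph (Fin n)}

lemma distM_nonneg (G : SimpleGraph (Fin n)) (i j : Fin n) : 0 ≤ distMatrix G i j :=
  Nat.cast_nonneg _

lemma distM_diag (G : SimpleGraph (Fin n)) (i : Fin n) : distMatrix G i i = 0 := by
  simp [distMatrix]

lemma distM_symm (G : SimpleGraph (Fin n)) (i j : Fin n) :
    distMatrix G i j = distMatrix G j i := by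
  simp [distMatrix, SimpleGraph.dist_comm]

lemma distM_one_le (hG : G.Connected) {i j : Fin n} (h : i ≠ j) : 1 ≤ distMatrix G i j := by
  have h1 : 0 < G.dist i j := hG.pos_dist_of_ne h
  have h2 : (1 : ℕ) ≤ G.dist i j := h1
  show (1:ℝ) ≤ (G.dist i j : ℝ)
  exact_mod_cast h2

/-- A single vertex gives the Pareto eigenvalue `0`. -/
lemma zero_mem (G : SimpleGraph (Fin n)) (a : Fin n) : IsParetoEigenvalue (distMatrix G) 0 := by
  refine ⟨Pi.single a 1, ?_, ?_, ?_, ?_⟩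
  · intro h
    have := congrFun h a
    simp at this
  · intro i
    rcases eq_or_ne i a with rfl | hia
    · simp
    · simp [Pi.single_eq_of_ne hia]
  · intro i
    rw [zero_mul, Matrix.mulVec_single]
    exact mul_nonneg (distM_nonneg G i a) zero_le_one
  · simp [Matrix.mulVec_single, single_dotProduct, distM_diag]

/-- A pair of vertices at distance `c` gives the Pareto eigenvalue `c`. -/
lemma pair_mem (hG : G.Connected) {a b : Fin n} (hab : a ≠ b) (c : ℝ)
    (hc : distMatrix G a b = c) : IsParetoEigenvalue (distMatrix G) c := by
  have hc0 : 0 < c := lt_of_lt_of_le one_pos (hc ▸ distM_one_le hG hab)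
  have hcba : distMatrix G b a = c := (distM_symm G b a).trans hc
  set x : Fin n → ℝ := Pi.single a 1 + Pi.single b 1 with hx
  have hxa : x a = 1 := by simp [hx, Pi.single_apply, hab, hab.symm]
  have hxb : x b = 1 := by simp [hx, Pi.single_apply, hab, hab.symm]
  have hxo : ∀ i, i ≠ a → i ≠ b → x i = 0 := by
    intro i hia hib
    simp [hx, Pi.single_apply, hia, hib]
  have hmul : ∀ i, (distMatrix G).mulVec x i = distMatrix G i a + distMatrix G i b := by
    intro i
    simp [hx, Matrix.mulVec_add, Matrix.mulVec_single]
  have hdot : ∀ v : Fin n → ℝ, x ⬝ᵥ v = v a + v b := by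
    intro v
    simp [hx, add_dotProduct, single_dotProduct]
  refine ⟨x, ?_, ?_, ?_, ?_⟩
  · intro h
    have := congrFun h a
    rw [hxa] at this
    simpa using this
  · intro i
    rcases eq_or_ne i a with rfl | hia
    · rw [hxa]; norm_num
    rcases eq_or_ne i b with rfl | hib
    · rw [hxb]; norm_num
    · rw [hxo i hia hib]
  · intro i
    rw [hmul]
    rcases eq_or_ne i a with rfl | hia
    · rw [hxa, distM_diag, hc]; linarith
    rcases eq_or_ne i b with rfl | hib
    · rw [hxb, distM_diag, hcba]; linarith
    · rw [hxo i hia hib, mul_zero]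
      exact add_nonneg (distM_nonneg G i a) (distM_nonneg G i b)
  · rw [hdot, hdot, hmul, hmul, hxa, hxb, distM_diag, distM_diag, hc, hcba]
    field_simp
    ring

/-- A path `a - b - c` with `dist a c = 2` gives the Pareto eigenvalue `1 + √3`. -/
lemma triple_mem (hG : G.Connected) {a b c : Fin n} (hab : G.Adj a b) (hbc : G.Adj b c)
    (hac : G.dist a c = 2) : IsParetoEigenvalue (distMatrix G) (1 + Real.sqrt 3) := by
  set s := Real.sqrt 3 with hsdef
  have hs : s ^ 2 = 3 := Real.sq_sqrt (by norm_num)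
  have hs0 : 0 ≤ s := Real.sqrt_nonneg 3
  have hs1 : 1 < s := by nlinarith
  have hs2 : s < 2 := by nlinarith
  have hne_ab : a ≠ b := hab.ne
  have hne_bc : b ≠ c := hbc.ne
  have hne_ac : a ≠ c := by
    intro h
    rw [h, SimpleGraph.dist_self] at hac
    exact two_ne_zero hac.symm
  have dab : distMatrix G a b = 1 := by
    simp [distMatrix, SimpleGraph.dist_eq_one_iff_adj.mpr hab]
  have dba : distMatrix G b a = 1 := (distM_symm G b a).trans dab
  have dbc : distMatrix G b c = 1 := by
    simp [distMatrix, SimpleGraph.dist_eq_one_iff_adj.mpr hbc]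
  have dcb : distMatrix G c b = 1 := (distM_symm G c b).trans dbc
  have dac : distMatrix G a c = 2 := by simp [distMatrix, hac]
  have dca : distMatrix G c a = 2 := (distM_symm G c a).trans dac
  set x : Fin n → ℝ := Pi.single a 1 + Pi.single b (s - 1) + Pi.single c 1 with hx
  have hxa : x a = 1 := by
    simp [hx, Pi.single_apply, hne_ab, hne_ab.symm, hne_ac, hne_ac.symm, hne_bc, hne_bc.symm]
  have hxb : x b = s - 1 := by
    simp [hx, Pi.single_apply, hne_ab, hne_ab.symm, hne_ac, hne_ac.symm, hne_bc, hne_bc.symm]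
  have hxc : x c = 1 := by
    simp [hx, Pi.single_apply, hne_ab, hne_ab.symm, hne_ac, hne_ac.symm, hne_bc, hne_bc.symm]
  have hxo : ∀ i, i ≠ a → i ≠ b → i ≠ c → x i = 0 := by
    intro i h1 h2 h3
    simp [hx, Pi.single_apply, h1, h2, h3]
  have hmul : ∀ i, (distMatrix G).mulVec x i
      = distMatrix G i a + distMatrix G i b * (s - 1) + distMatrix G i c := by
    intro i
    simp [hx, Matrix.mulVec_add, Matrix.mulVec_single]
  have hdot : ∀ v : Fin n → ℝ, x ⬝ᵥ v = v a + (s - 1) * v b + v c := by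
    intro v
    simp only [hx, add_dotProduct, single_dotProduct]
    ring
  refine ⟨x, ?_, ?_, ?_, ?_⟩
  · intro h
    have := congrFun h a
    rw [hxa] at this
    simpa using this
  · intro i
    rcases eq_or_ne i a with rfl | h1
    · rw [hxa]; norm_num
    rcases eq_or_ne i b with rfl | h2
    · rw [hxb]; linarith
    rcases eq_or_ne i c with rfl | h3
    · rw [hxc]; norm_num
    · rw [hxo i h1 h2 h3]
  · intro i
    rw [hmul]
    rcases eq_or_ne i a with rfl | h1
    · rw [hxa, distM_diag, dab, dac]; nlinarith
    rcases eq_or_ne i b with rfl | h2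
    · rw [hxb, distM_diag, dba, dbc]; nlinarith
    rcases eq_or_ne i c with rfl | h3
    · rw [hxc, distM_diag, dca, dcb]; nlinarith
    · rw [hxo i h1 h2 h3, mul_zero]
      have n1 := distM_nonneg G i a
      have n2 := distM_nonneg G i b
      have n3 := distM_nonneg G i c
      nlinarith
  · rw [hdot, hdot, hmul, hmul, hmul, hxa, hxb, hxc, distM_diag, distM_diag, distM_diag,
      dab, dba, dbc, dcb, dac, dca]
    have hden : (1 : ℝ) + (s - 1) * (s - 1) + 1 ≠ 0 := by nlinarith
    rw [eq_div_iff hden]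
    nlinarith

lemma exists_dist_two_aux (hG : G.Connected) :
    ∀ k (u v : Fin n), G.dist u v = k + 2 →
      ∃ a b c : Fin n, G.Adj a b ∧ G.Adj b c ∧ G.dist a c = 2 := by
  intro k
  induction k with
  | zero =>
    intro u v huv
    obtain ⟨p, hp⟩ := hG.exists_walk_length_eq_dist u v
    rw [huv] at hp
    match p, hp with
    | SimpleGraph.Walk.cons h (SimpleGraph.Walk.cons h' SimpleGraph.Walk.nil), _ =>
      exact ⟨u, _, v, h, h', huv⟩
  | succ k ih =>
    intro u v huv
    obtain ⟨p, hp⟩ := hG.exists_walk_length_eq_dist u v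
    rw [huv] at hp
    cases p with
    | nil => simp at hp
    | @cons _ w _ h q =>
      have hq1 : G.dist w v ≤ k + 2 := by
        have := SimpleGraph.dist_le q
        simp [SimpleGraph.Walk.length_cons] at hp
        omega
      have hq2 : k + 2 ≤ G.dist w v := by
        have htri := hG.dist_triangle (u := u) (v := w) (w := v)
        have huw : G.dist u w ≤ 1 := by
          simpa using SimpleGraph.dist_le (SimpleGraph.Walk.cons h SimpleGraph.Walk.nil)
        omega
      exact ih w v (le_antisymm hq1 hq2)

lemma exists_triple (hG : G.Connected) (hnc : G ≠ ⊤) :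
    ∃ a b c : Fin n, G.Adj a b ∧ G.Adj b c ∧ G.dist a c = 2 := by
  have hpair : ∃ u v : Fin n, u ≠ v ∧ ¬G.Adj u v := by
    by_contra hcon
    push_neg at hcon
    apply hnc
    ext u v
    simp only [SimpleGraph.top_adj]
    exact ⟨fun h => h.ne, fun h => hcon u v h⟩
  obtain ⟨u, v, huv, hnadj⟩ := hpair
  have h1 : 0 < G.dist u v := hG.pos_dist_of_ne huv
  have h2 : G.dist u v ≠ 1 := fun h => hnadj (SimpleGraph.dist_eq_one_iff_adj.mp h)
  obtain ⟨k, hk⟩ : ∃ k, G.dist u v = k + 2 := ⟨G.dist u v - 2, by omega⟩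
  exact exists_dist_two_aux hG k u v hk

set_option maxHeartbeats 1600000 in
/-- Any distance Pareto eigenvalue below `1 + √3` is `0`, `1` or `2`. -/
lemma below (hG : G.Connected) {lam : ℝ} (h : IsParetoEigenvalue (distMatrix G) lam)
    (hlt : lam < 1 + Real.sqrt 3) : lam = 0 ∨ lam = 1 ∨ lam = 2 := by
  classical
  set s := Real.sqrt 3 with hsdef
  have hs : s ^ 2 = 3 := Real.sq_sqrt (by norm_num)
  have hs0 : 0 ≤ s := Real.sqrt_nonneg 3
  have hs1 : 1 < s := by nlinarith
  have hs2 : s < 2 := by nlinarith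
  obtain ⟨x, hx0, hxn, hxle, hray⟩ := h
  set A := distMatrix G with hA
  have hdiag : ∀ i, A i i = 0 := distM_diag G
  have hsymmA : ∀ i j, A i j = A j i := distM_symm G
  have honeA : ∀ i j, i ≠ j → 1 ≤ A i j := fun i j hij => distM_one_le hG hij
  have hnnA : ∀ i j, 0 ≤ A i j := distM_nonneg G
  -- positivity of the denominator
  obtain ⟨a0, ha0⟩ : ∃ i, 0 < x i := by
    by_contra hcon
    push_neg at hcon
    exact hx0 (funext fun i => le_antisymm (hcon i) (hxn i))
  have hden : 0 < x ⬝ᵥ x := by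
    have hterm : ∀ i ∈ Finset.univ, 0 ≤ x i * x i := fun i _ => mul_nonneg (hxn i) (hxn i)
    have : 0 < x a0 * x a0 := mul_pos ha0 ha0
    exact Finset.sum_pos' hterm ⟨a0, Finset.mem_univ a0, this⟩
  have hray' : x ⬝ᵥ A.mulVec x = lam * (x ⬝ᵥ x) := by
    rw [eq_div_iff hden.ne'] at hray
    linarith
  -- complementarity
  have hzero : ∀ i, x i * (A.mulVec x i - lam * x i) = 0 := by
    have hsum : ∑ i, x i * (A.mulVec x i - lam * x i) = 0 := by
      have e1 : ∑ i, x i * (A.mulVec x i - lam * x i)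
          = (x ⬝ᵥ A.mulVec x) - lam * (x ⬝ᵥ x) := by
        simp only [dotProduct, mul_sub, Finset.sum_sub_distrib, Finset.mul_sum]
        congr 1
        apply Finset.sum_congr rfl
        intros
        ring
      rw [e1, hray']
      ring
    intro i
    have := (Finset.sum_eq_zero_iff_of_nonneg (fun i _ =>
      mul_nonneg (hxn i) (by linarith [hxle i]))).mp hsum i (Finset.mem_univ i)
    exact this
  have heq : ∀ i, 0 < x i → A.mulVec x i = lam * x i := by
    intro i hi
    have := hzero i
    rcases mul_eq_zero.mp this with h | h
    · exact absurd h hi.ne'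
    · linarith
  -- lam is nonnegative
  have hlam0 : 0 ≤ lam := by
    rw [hray]
    apply div_nonneg _ hden.le
    apply Finset.sum_nonneg
    intro i _
    apply mul_nonneg (hxn i)
    show (0:ℝ) ≤ ∑ j, A i j * x j
    apply Finset.sum_nonneg
    intro j _
    exact mul_nonneg (hnnA i j) (hxn j)
  -- the support
  set S : Finset (Fin n) := Finset.univ.filter (fun i => 0 < x i) with hS
  have hmemS : ∀ i, i ∈ S ↔ 0 < x i := by
    intro i; simp [hS]
  have hnotS : ∀ i, i ∉ S → x i = 0 := by
    intro i hi
    rw [hmemS] at hi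
    push_neg at hi
    exact le_antisymm hi (hxn i)
  have hSne : S.Nonempty := ⟨a0, (hmemS a0).mpr ha0⟩
  have hmulval : ∀ i, A.mulVec x i = ∑ j, A i j * x j := fun i => rfl
  -- case on the cardinality of the support
  rcases lt_trichotomy S.card 2 with hcard | hcard | hcard
  · -- |S| = 1 : lam = 0
    left
    have hcard1 : S.card = 1 := by
      have := Finset.card_pos.mpr hSne
      omega
    obtain ⟨a, haS⟩ := Finset.card_eq_one.mp hcard1
    have haa : 0 < x a := (hmemS a).mp (haS ▸ Finset.mem_singleton_self a)
    have hz : A.mulVec x a = 0 := by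
      rw [hmulval]
      apply Finset.sum_eq_zero
      intro j _
      rcases eq_or_ne j a with rfl | hja
      · rw [hdiag, zero_mul]
      · rw [hnotS j (by rw [haS]; simpa using hja), mul_zero]
    have := heq a haa
    rw [hz] at this
    have := this.symm
    rcases mul_eq_zero.mp this with h | h
    · exact h
    · exact absurd h haa.ne'
  · -- |S| = 2 : lam = dist of the two support vertices
    obtain ⟨a, b, hab, hSab⟩ := Finset.card_eq_two.mp hcard
    have hxa : 0 < x a := (hmemS a).mp (by rw [hSab]; simp)
    have hxb : 0 < x b := (hmemS b).mp (by rw [hSab]; simp)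
    set d : ℝ := A a b with hd
    have hd1 : 1 ≤ d := honeA _ _ hab
    have e1 : lam * x a = d * x b := by
      rw [← heq a hxa, hmulval]
      rw [Finset.sum_eq_single b]
      · intro j _ hjb
        rcases eq_or_ne j a with rfl | hja
        · rw [hdiag, zero_mul]
        · rw [hnotS j (by rw [hSab]; simp [hja, hjb]), mul_zero]
      · intro hb; exact absurd (Finset.mem_univ b) hb
    have e2 : lam * x b = d * x a := by
      rw [← heq b hxb, hmulval]
      rw [Finset.sum_eq_single a]
      · rw [hd, hsymmA]
      · intro j _ hja
        rcases eq_or_ne j b with rfl | hjb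
        · rw [hdiag, zero_mul]
        · rw [hnotS j (by rw [hSab]; simp [hja, hjb]), mul_zero]
      · intro ha; exact absurd (Finset.mem_univ a) ha
    have hlamd : lam = d := by
      have hsq : (lam - d) * (lam + d) * (x a * x b) = 0 := by
        linear_combination (lam * x b) * e1 + (d * x b) * e2
      have hpos : (0:ℝ) < x a * x b := mul_pos hxa hxb
      rcases mul_eq_zero.mp hsq with h | h
      · rcases mul_eq_zero.mp h with h' | h'
        · linarith
        · nlinarith
      · exact absurd h hpos.ne'
    -- d < 3 so dist = 1 or 2
    have hdist3 : (G.dist a b : ℝ) < 3 := by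
      have : d < 3 := by rw [← hlamd]; linarith
      exact this
    have hdistnat : G.dist a b = 1 ∨ G.dist a b = 2 := by
      have h3 : G.dist a b < 3 := by exact_mod_cast hdist3
      have h1 : 0 < G.dist a b := hG.pos_dist_of_ne hab
      omega
    rcases hdistnat with h | h
    · right; left; rw [hlamd, hd, hA]; simp [distMatrix, h]
    · right; right; rw [hlamd, hd, hA]; simp [distMatrix, h]
  · -- |S| ≥ 3
    have hbound : ∀ m p q : Fin n, p ≠ q →
        A m p * x p + A m q * x q ≤ A.mulVec x m := by
      intro m p q hpq
      have hsub := Finset.sum_le_sum_of_subset_of_nonneg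
        (Finset.subset_univ ({p, q} : Finset (Fin n)))
        (fun j _ _ => mul_nonneg (hnnA m j) (hxn j))
      rw [Finset.sum_pair hpq] at hsub
      rw [hmulval]
      exact hsub
    by_cases h2 : ∃ i ∈ S, ∃ j ∈ S, (2:ℝ) ≤ A i j
    · -- a distance ≥ 2 inside the support forces lam ≥ 1 + √3 : contradiction
      exfalso
      obtain ⟨i, hiS, j, hjS, hij2⟩ := h2
      have hijne : i ≠ j := by
        intro h
        rw [h, hdiag] at hij2
        linarith
      -- third point
      obtain ⟨k, hk⟩ : ∃ k, k ∈ (S.erase i).erase j := by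
        apply Finset.Nonempty.exists_mem
        rw [← Finset.card_pos]
        have c1 : (S.erase i).card = S.card - 1 := Finset.card_erase_of_mem hiS
        have c2 : ((S.erase i).erase j).card = (S.erase i).card - 1 :=
          Finset.card_erase_of_mem (Finset.mem_erase.mpr ⟨hijne.symm, hjS⟩)
        omega
      have hkj : k ≠ j := (Finset.mem_erase.mp hk).1
      have hki : k ≠ i := (Finset.mem_erase.mp ((Finset.mem_erase.mp hk).2)).1
      have hkS : k ∈ S := (Finset.mem_erase.mp ((Finset.mem_erase.mp hk).2)).2
      have hxi : 0 < x i := (hmemS i).mp hiS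
      have hxj : 0 < x j := (hmemS j).mp hjS
      have hxk : 0 < x k := (hmemS k).mp hkS
      -- the three inequalities
      have g1 : x i + x j ≤ lam * x k := by
        rw [← heq k hxk]
        calc x i + x j ≤ A k i * x i + A k j * x j := by
              have := honeA _ _ hki
              have := honeA _ _ hkj
              nlinarith
          _ ≤ A.mulVec x k := hbound k i j hijne
      have g2 : x k + 2 * x j ≤ lam * x i := by
        rw [← heq i hxi]
        calc x k + 2 * x j ≤ A i k * x k + A i j * x j := by
              have := honeA _ _ hki.symm
              nlinarith
          _ ≤ A.mulVec x i := hbound i k j hkj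
      have g3 : x k + 2 * x i ≤ lam * x j := by
        rw [← heq j hxj]
        have hji2 : (2:ℝ) ≤ A j i := by rw [hsymmA]; exact hij2
        calc x k + 2 * x i ≤ A j k * x k + A j i * x i := by
              have := honeA _ _ hkj.symm
              nlinarith
          _ ≤ A.mulVec x j := hbound j k i hki
      -- algebra: lam^2 ≥ 2 lam + 2
      have ht : 0 < x i + x j := by linarith
      have hlampos : 0 < lam := by nlinarith [g1, hxk, hxi, hxj]
      have k1 : 2 * x k + 2 * (x i + x j) ≤ lam * (x i + x j) := by linarith
      have k2 : lam * (2 * x k + 2 * (x i + x j)) ≤ lam * (lam * (x i + x j)) :=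
        mul_le_mul_of_nonneg_left k1 hlam0
      have k3 : 2 * (x i + x j) ≤ lam * (2 * x k) := by linarith
      have k4 : (2 + 2 * lam) * (x i + x j) ≤ lam ^ 2 * (x i + x j) := by nlinarith [k2, k3]
      have key : 2 * lam + 2 ≤ lam ^ 2 := by nlinarith [k4, ht]
      -- hence lam ≥ 1 + √3
      have hlam1 : 1 ≤ lam := by nlinarith [key, hlam0]
      have : s ≤ lam - 1 := by
        have h3 : (3:ℝ) ≤ (lam - 1) ^ 2 := by nlinarith [key]
        have := Real.sqrt_le_sqrt h3
        rwa [Real.sqrt_sq (by linarith)] at this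
      linarith
    · -- all distances in the support are 1 : lam = |S| - 1
      push_neg at h2
      have hdist1 : ∀ i ∈ S, ∀ j ∈ S, i ≠ j → A i j = 1 := by
        intro i hi j hj hij
        have hn2 : (G.dist i j : ℝ) < 2 := h2 i hi j hj
        have hn2' : G.dist i j < 2 := by exact_mod_cast hn2
        have hn1 : 0 < G.dist i j := hG.pos_dist_of_ne hij
        have hd1 : G.dist i j = 1 := by omega
        show ((G.dist i j : ℕ) : ℝ) = 1
        exact_mod_cast hd1
      set T : ℝ := ∑ j ∈ S, x j with hT
      have hTpos : 0 < T := by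
        apply Finset.sum_pos
        · intro i hi; exact (hmemS i).mp hi
        · exact hSne
      have he : ∀ i ∈ S, lam * x i = T - x i := by
        intro i hi
        rw [← heq i ((hmemS i).mp hi), hmulval]
        have e1 : ∑ j, A i j * x j = ∑ j ∈ S, A i j * x j := by
          symm
          apply Finset.sum_subset (Finset.subset_univ S)
          intro j _ hjS
          rw [hnotS j hjS, mul_zero]
        rw [e1]
        have e2 : ∑ j ∈ S, A i j * x j = ∑ j ∈ S.erase i, A i j * x j + A i i * x i :=
          (Finset.sum_erase_add S _ hi).symm
        rw [e2, hdiag, zero_mul, add_zero]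
        have e3 : ∑ j ∈ S.erase i, A i j * x j = ∑ j ∈ S.erase i, x j := by
          apply Finset.sum_congr rfl
          intro j hj
          rw [hdist1 i hi j (Finset.mem_of_mem_erase hj)
            (Ne.symm (Finset.mem_erase.mp hj).1), one_mul]
        rw [e3]
        rw [Finset.sum_erase_eq_sub hi]
      -- sum over S
      have hsumeq : lam * T = (S.card : ℝ) * T - T := by
        have := Finset.sum_congr rfl he
        rw [← Finset.mul_sum] at this
        rw [Finset.sum_sub_distrib, Finset.sum_const, nsmul_eq_mul] at this
        exact this
      have hlamcard : lam = (S.card : ℝ) - 1 := by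
        have : (lam - ((S.card : ℝ) - 1)) * T = 0 := by linarith
        rcases mul_eq_zero.mp this with h | h
        · linarith
        · exact absurd h hTpos.ne'
      have hcard4 : S.card < 4 := by
        by_contra hc
        push_neg at hc
        have : (4:ℝ) ≤ (S.card : ℝ) := by exact_mod_cast hc
        rw [hlamcard] at hlt
        linarith
      have hcard3 : S.card = 3 := by omega
      right; right
      rw [hlamcard, hcard3]
      norm_num

end Stmt13Aux

theorem stmt13 (n : ℕ) (G : SimpleGraph (Fin n)) (hG : G.Connected) (hnc : G ≠ ⊤) :
    IsKthSmallest (distParetoSet G) 4 (1 + Real.sqrt 3) := by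
  obtain ⟨a, b, c, hab, hbc, hac⟩ := Stmt13Aux.exists_triple hG hnc
  have hs : Real.sqrt 3 ^ 2 = 3 := Real.sq_sqrt (by norm_num)
  have hs0 : 0 ≤ Real.sqrt 3 := Real.sqrt_nonneg 3
  have hs1 : 1 < Real.sqrt 3 := by nlinarith
  constructor
  · exact Stmt13Aux.triple_mem hG hab hbc hac
  · have hset : {y ∈ distParetoSet G | y < 1 + Real.sqrt 3} = {0, 1, 2} := by
      ext y
      simp only [Set.mem_setOf_eq, Set.mem_insert_iff, Set.mem_singleton_iff]
      constructor
      · rintro ⟨hy, hlt⟩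
        exact Stmt13Aux.below hG hy hlt
      · rintro (rfl | rfl | rfl)
        · exact ⟨Stmt13Aux.zero_mem G a, by linarith⟩
        · refine ⟨Stmt13Aux.pair_mem hG hab.ne 1 ?_, by linarith⟩
          simp [distMatrix, SimpleGraph.dist_eq_one_iff_adj.mpr hab]
        · have hac_ne : a ≠ c := by
            intro h
            rw [h, SimpleGraph.dist_self] at hac
            exact two_ne_zero hac.symm
          exact ⟨Stmt13Aux.pair_mem hG hac_ne 2 (by simp [distMatrix, hac]), by linarith⟩
    rw [hset]
    rw [Set.ncard_insert_of_notMem (by norm_num) ((Set.finite_singleton (2:ℝ)).insert 1),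
      Set.ncard_pair (by norm_num : (1:ℝ) ≠ 2)]
end

section
/- If G is a connected graph on at least 4 vertices that is not complete, then μ₅(G) ≥ 3, and equality holds if and only if the clique number of G is at least 4 or the diameter of G is at least 3. -/
open Matrix SimpleGraph

namespace Aux
variable {n : ℕ} {G : SimpleGraph (Fin n)}

lemma dM_nonneg (G : SimpleGraph (Fin n)) (i j : Fin n) : 0 ≤ distMatrix G i j :=
  Nat.cast_nonneg _

lemma dM_diag (G : SimpleGraph (Fin n)) (i : Fin n) : distMatrix G i i = 0 := by
  simp [distMatrix]

lemma dM_symm (G : SimpleGraph (Fin n)) (i j : Fin n) : distMatrix G i j = distMatrix G j i := by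
  simp [distMatrix, SimpleGraph.dist_comm]

lemma dM_one_le (hG : G.Connected) {i j : Fin n} (h : i ≠ j) : 1 ≤ distMatrix G i j := by
  have := hG.pos_dist_of_ne h
  show (1:ℝ) ≤ (G.dist i j : ℝ)
  exact_mod_cast this

lemma mulVec_eq_sum (A : Matrix (Fin n) (Fin n) ℝ) (x : Fin n → ℝ) (i : Fin n) :
    A.mulVec x i = ∑ j, A i j * x j := rfl

lemma dot_pos {x : Fin n → ℝ} (hne : x ≠ 0) (hnn : ∀ i, 0 ≤ x i) : 0 < x ⬝ᵥ x := by
  obtain ⟨i, hi⟩ := Function.ne_iff.mp hne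
  refine Finset.sum_pos' (fun j _ => mul_self_nonneg _) ⟨i, Finset.mem_univ i, ?_⟩
  have : 0 < x i := lt_of_le_of_ne (hnn i) (Ne.symm hi)
  positivity

/-- Constructor for membership in the Pareto set. -/
lemma mem_pareto_of (G : SimpleGraph (Fin n)) (lam : ℝ) (x : Fin n → ℝ) (hne : x ≠ 0)
    (hnn : ∀ i, 0 ≤ x i)
    (heq : ∀ i, x i ≠ 0 → (distMatrix G).mulVec x i = lam * x i) :
    lam ∈ distParetoSet G := by
  refine ⟨x, hne, hnn, ?_, ?_⟩
  · intro i
    by_cases h : x i = 0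
    · rw [h, mul_zero, mulVec_eq_sum]
      exact Finset.sum_nonneg fun j _ => mul_nonneg (dM_nonneg G i j) (hnn j)
    · rw [heq i h]
  · have h1 : x ⬝ᵥ (distMatrix G).mulVec x = lam * (x ⬝ᵥ x) := by
      unfold dotProduct
      rw [Finset.mul_sum]
      refine Finset.sum_congr rfl fun i _ => ?_
      by_cases h : x i = 0
      · simp [h]
      · rw [heq i h]; ring
    have h2 : x ⬝ᵥ x ≠ 0 := ne_of_gt (dot_pos hne hnn)
    rw [h1]
    field_simp

/-- On the support, a Pareto eigenpair satisfies the exact eigen-equation. -/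
lemma eq_on_support {lam : ℝ} {x : Fin n → ℝ}
    (hp : IsParetoEigenpair (distMatrix G) lam x) :
    ∀ i, x i ≠ 0 → (distMatrix G).mulVec x i = lam * x i := by
  obtain ⟨hne, hnn, hge, hray⟩ := hp
  have hxx : (0:ℝ) < x ⬝ᵥ x := dot_pos hne hnn
  have hsum : ∑ i, x i * ((distMatrix G).mulVec x i - lam * x i) = 0 := by
    have h1 : x ⬝ᵥ (distMatrix G).mulVec x = lam * (x ⬝ᵥ x) := by
      rw [hray]; field_simp
    have : ∑ i, x i * ((distMatrix G).mulVec x i - lam * x i)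
        = (x ⬝ᵥ (distMatrix G).mulVec x) - lam * (x ⬝ᵥ x) := by
      unfold dotProduct
      rw [Finset.mul_sum, ← Finset.sum_sub_distrib]
      refine Finset.sum_congr rfl fun i _ => by ring
    rw [this, h1, sub_self]
  intro i hi
  have hterm := (Finset.sum_eq_zero_iff_of_nonneg
    (fun j _ => mul_nonneg (hnn j) (sub_nonneg.2 (hge j)))).mp hsum i (Finset.mem_univ i)
  rcases mul_eq_zero.mp hterm with h | h
  · exact absurd h hi
  · linarith [sub_eq_zero.mp h]

end Aux

namespace Aux

set_option maxHeartbeats 1000000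

lemma cubic_cube {lam : ℝ} (h0 : 0 ≤ lam) (hle : lam ≤ 3) : lam^3 ≤ 9 * lam := by
  nlinarith [mul_nonneg (mul_nonneg h0 (by linarith : (0:ℝ) ≤ 3 - lam))
    (by linarith : (0:ℝ) ≤ lam + 3)]

lemma cubic_big {lam a b c : ℝ} (hlam2 : 2 ≤ lam) (hle : lam ≤ 3) (ha : 3 ≤ a) (hb : 1 ≤ b)
    (hc : 1 ≤ c) (hk : lam^3 = (a^2+b^2+c^2)*lam + 2*a*b*c) : False := by
  have hcube := cubic_cube (by linarith) hle
  have hs : 11 ≤ a^2+b^2+c^2 := by nlinarith [sq_nonneg (b-1), sq_nonneg (c-1), sq_nonneg (a-3)]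
  have hmul : 22 ≤ (a^2+b^2+c^2)*lam := by
    nlinarith [mul_nonneg (by linarith : (0:ℝ) ≤ a^2+b^2+c^2 - 11)
      (by linarith : (0:ℝ) ≤ lam - 2)]
  have habc : 3 ≤ a*b*c := by
    nlinarith [mul_nonneg (mul_nonneg (by linarith : (0:ℝ) ≤ a - 3)
      (by linarith : (0:ℝ) ≤ b)) (by linarith : (0:ℝ) ≤ c),
      mul_nonneg (by linarith : (0:ℝ) ≤ b - 1) (by linarith : (0:ℝ) ≤ c),
      mul_nonneg (by linarith : (0:ℝ) ≤ c - 1) (by linarith : (0:ℝ) ≤ b)]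
  linarith

lemma cubic111 {lam : ℝ} (hlam2 : 2 ≤ lam) (hk : lam^3 = 3*lam + 2) : lam = 2 := by
  have h0 : (lam - 2) * (lam + 1)^2 = 0 := by linear_combination hk
  rcases mul_eq_zero.mp h0 with h | h
  · linarith
  · have := pow_eq_zero_iff (n := 2) (by norm_num) |>.mp h
    linarith

lemma cubic112 {lam : ℝ} (hlam2 : 2 ≤ lam) (hk : lam^3 = 6*lam + 4) :
    lam = 1 + Real.sqrt 3 := by
  have h0 : (lam + 2) * (lam^2 - 2*lam - 2) = 0 := by linear_combination hk
  have h2 : lam^2 = 2*lam + 2 := by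
    rcases mul_eq_zero.mp h0 with h | h
    · linarith
    · linarith
  have hs : Real.sqrt 3 = lam - 1 := by
    rw [show (3:ℝ) = (lam - 1)^2 by nlinarith [h2]]
    exact Real.sqrt_sq (by linarith)
  rw [hs]; ring

lemma cubic122 {lam : ℝ} (hlam2 : 2 ≤ lam) (hle : lam ≤ 3) (hk : lam^3 = 9*lam + 8) :
    False := by
  linarith [cubic_cube (by linarith) hle]

lemma cubic222 {lam : ℝ} (hlam2 : 2 ≤ lam) (hle : lam ≤ 3) (hk : lam^3 = 12*lam + 16) :
    False := by
  linarith [cubic_cube (by linarith) hle]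

end Aux

namespace Aux
variable {n : ℕ} {G : SimpleGraph (Fin n)}

lemma classify (hG : G.Connected) {lam : ℝ} (h : lam ∈ distParetoSet G) (hle : lam ≤ 3) :
    lam = 0 ∨ lam = 1 ∨ lam = 2 ∨ lam = 1 + Real.sqrt 3 ∨
      (lam = 3 ∧ ((∃ u w : Fin n, G.dist u w = 3) ∨
        ∃ K : Finset (Fin n), K.card = 4 ∧ (K : Set (Fin n)).Pairwise G.Adj)) := by
  classical
  obtain ⟨x, hp⟩ := h
  have heq := Aux.eq_on_support (G := G) hp
  obtain ⟨hne, hnn, hge, hray⟩ := hp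
  set S : Finset (Fin n) := Finset.univ.filter (fun j => x j ≠ 0) with hS
  have hmemS : ∀ j, j ∈ S ↔ x j ≠ 0 := by simp [hS]
  have hpos : ∀ j ∈ S, 0 < x j := fun j hj => lt_of_le_of_ne (hnn j) (Ne.symm ((hmemS j).1 hj))
  have hSne : S.Nonempty := by
    obtain ⟨i, hi⟩ := Function.ne_iff.mp hne
    exact ⟨i, (hmemS i).2 hi⟩
  have hzero : ∀ j, j ∉ S → x j = 0 := by
    intro j hj
    by_contra hc
    exact hj ((hmemS j).2 hc)
  -- restricted eigen-equation on the support
  have hEq : ∀ i ∈ S, lam * x i = ∑ j ∈ S, distMatrix G i j * x j := by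
    intro i hi
    rw [← heq i ((hmemS i).1 hi), mulVec_eq_sum]
    exact (Finset.sum_subset (Finset.subset_univ S)
      (fun j _ hj => by rw [hzero j hj, mul_zero])).symm
  -- minimal element of the support
  obtain ⟨i₀, hi₀S, hi₀min⟩ := Finset.exists_min_image S x hSne
  have key0 : lam * x i₀ = ∑ j ∈ S.erase i₀, distMatrix G i₀ j * x j := by
    rw [hEq i₀ hi₀S]
    exact (Finset.sum_erase _ (by rw [dM_diag, zero_mul])).symm
  have hterm : ∀ j ∈ S.erase i₀, x i₀ ≤ distMatrix G i₀ j * x j := by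
    intro j hj
    have hjS := Finset.mem_of_mem_erase hj
    have hne' : i₀ ≠ j := fun hc => (Finset.ne_of_mem_erase hj) hc.symm
    calc x i₀ ≤ x j := hi₀min j hjS
    _ ≤ distMatrix G i₀ j * x j :=
        le_mul_of_one_le_left (le_of_lt (hpos j hjS)) (dM_one_le hG hne')
  have hcarde : (S.erase i₀).card = S.card - 1 := Finset.card_erase_of_mem hi₀S
  have hA : ((S.card : ℝ) - 1) ≤ lam := by
    have h1 : ((S.card : ℝ) - 1) * x i₀ ≤ lam * x i₀ := by
      rw [key0]
      calc ((S.card : ℝ) - 1) * x i₀ = ∑ _j ∈ S.erase i₀, x i₀ := by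
            rw [Finset.sum_const, hcarde, nsmul_eq_mul, Nat.cast_sub hSne.card_pos]
            push_cast
            ring
      _ ≤ ∑ j ∈ S.erase i₀, distMatrix G i₀ j * x j := Finset.sum_le_sum hterm
    exact le_of_mul_le_mul_right h1 (hpos i₀ hi₀S)
  have hcard4 : S.card ≤ 4 := by
    by_contra hc
    push_neg at hc
    have : (5:ℝ) ≤ (S.card : ℝ) := by exact_mod_cast hc
    linarith
  have hcases : S.card = 1 ∨ S.card = 2 ∨ S.card = 3 ∨ S.card = 4 := by
    have := hSne.card_pos
    omega
  rcases hcases with hc1 | hc2 | hc3 | hc4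
  -- card 1 : lam = 0
  · obtain ⟨i, hSi⟩ := Finset.card_eq_one.mp hc1
    have hiS : i ∈ S := by simp [hSi]
    have := hEq i hiS
    rw [hSi, Finset.sum_singleton, dM_diag, zero_mul] at this
    exact Or.inl (by
      have := mul_eq_zero.mp this
      rcases this with h | h
      · exact h
      · exact absurd h ((hmemS i).1 hiS))
  -- card 2 : lam is an integer distance
  · obtain ⟨i, j, hij, hSij⟩ := Finset.card_eq_two.mp hc2
    have hiS : i ∈ S := by simp [hSij]
    have hjS : j ∈ S := by simp [hSij]
    have e1 : lam * x i = distMatrix G i j * x j := by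
      have := hEq i hiS
      rwa [hSij, Finset.sum_pair hij, dM_diag, zero_mul, zero_add] at this
    have e2 : lam * x j = distMatrix G i j * x i := by
      have := hEq j hjS
      rwa [hSij, Finset.sum_pair hij, dM_diag, zero_mul, add_zero, dM_symm] at this
    have hsq : (lam - distMatrix G i j) * ((lam + distMatrix G i j) * x i) = 0 := by
      linear_combination lam * e1 + distMatrix G i j * e2
    have hlam1 : (1:ℝ) ≤ lam := by
      have : ((2:ℕ):ℝ) - 1 ≤ lam := by rw [← hc2]; exact hA
      push_cast at this
      linarith
    have hd1 : (1:ℝ) ≤ distMatrix G i j := dM_one_le hG hij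
    have hlamd : lam = distMatrix G i j := by
      rcases mul_eq_zero.mp hsq with h | h
      · linarith [sub_eq_zero.mp h]
      · rcases mul_eq_zero.mp h with h' | h'
        · linarith
        · exact absurd h' ((hmemS i).1 hiS)
    -- the distance is a natural number between 1 and 3
    have hlamcast : lam = (G.dist i j : ℝ) := hlamd
    have hdist1 : 1 ≤ G.dist i j := hG.pos_dist_of_ne hij
    have hdist3 : G.dist i j ≤ 3 := by
      have h3 : (G.dist i j : ℝ) ≤ 3 := by rw [← hlamcast]; exact hle
      exact_mod_cast h3
    have hor : G.dist i j = 1 ∨ G.dist i j = 2 ∨ G.dist i j = 3 := by omega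
    rcases hor with hdd | hdd | hdd <;> rw [hdd] at hlamcast <;> norm_num at hlamcast
    · exact Or.inr (Or.inl hlamcast)
    · exact Or.inr (Or.inr (Or.inl hlamcast))
    · exact Or.inr (Or.inr (Or.inr (Or.inr ⟨hlamcast, Or.inl ⟨i, j, hdd⟩⟩)))
  -- card 3
  · obtain ⟨i, j, k, hij, hik, hjk, hSf⟩ := Finset.card_eq_three.mp hc3
    have hiS : i ∈ S := by simp [hSf]
    have hjS : j ∈ S := by simp [hSf]
    have hkS : k ∈ S := by simp [hSf]
    have hsum3 : ∀ f : Fin n → ℝ, ∑ m ∈ S, f m = f i + f j + f k := by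
      intro f
      rw [hSf, Finset.sum_insert (by simp [hij, hik]), Finset.sum_insert (by simp [hjk]),
        Finset.sum_singleton]
      ring
    have e1 : lam * x i = distMatrix G i j * x j + distMatrix G i k * x k := by
      have h := hEq i hiS
      rw [hsum3] at h
      rw [h, dM_diag]
      ring
    have e2 : lam * x j = distMatrix G i j * x i + distMatrix G j k * x k := by
      have h := hEq j hjS
      rw [hsum3] at h
      rw [h, dM_diag, dM_symm G j i]
      ring
    have e3 : lam * x k = distMatrix G i k * x i + distMatrix G j k * x j := by
      have h := hEq k hkS
      rw [hsum3] at h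
      rw [h, dM_diag, dM_symm G k i, dM_symm G k j]
      ring
    have key : lam^3 = (distMatrix G i j^2 + distMatrix G i k^2 + distMatrix G j k^2)*lam
        + 2 * distMatrix G i j * distMatrix G i k * distMatrix G j k := by
      have key' : (lam^3 - (distMatrix G i j^2 + distMatrix G i k^2 + distMatrix G j k^2)*lam
          - 2 * distMatrix G i j * distMatrix G i k * distMatrix G j k) * x i = 0 := by
        linear_combination (lam^2 - distMatrix G j k^2) * e1
          + (lam * distMatrix G i j + distMatrix G i k * distMatrix G j k) * e2
          + (lam * distMatrix G i k + distMatrix G i j * distMatrix G j k) * e3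
      rcases mul_eq_zero.mp key' with h | h
      · linarith [h]
      · exact absurd h ((hmemS i).1 hiS)
    have hlam2 : (2:ℝ) ≤ lam := by
      have : ((3:ℕ):ℝ) - 1 ≤ lam := by rw [← hc3]; exact hA
      push_cast at this; linarith
    have ha1 : (1:ℝ) ≤ distMatrix G i j := dM_one_le hG hij
    have hb1 : (1:ℝ) ≤ distMatrix G i k := dM_one_le hG hik
    have hc1 : (1:ℝ) ≤ distMatrix G j k := dM_one_le hG hjk
    -- each distance is at most 2
    have ha2 : distMatrix G i j ≤ 2 := by
      by_contra hcon
      push_neg at hcon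
      have h3 : 3 ≤ G.dist i j := by
        by_contra h4
        push_neg at h4
        have : (G.dist i j : ℝ) ≤ 2 := by exact_mod_cast Nat.lt_succ_iff.mp (by omega)
        exact absurd this (not_le.mpr hcon)
      exact cubic_big hlam2 hle (show (3:ℝ) ≤ distMatrix G i j from (by exact_mod_cast h3 : (3:ℝ) ≤ ((G.dist i j : ℕ):ℝ))) hb1 hc1 key
    have hb2 : distMatrix G i k ≤ 2 := by
      by_contra hcon
      push_neg at hcon
      have h3 : 3 ≤ G.dist i k := by
        by_contra h4
        push_neg at h4
        have : (G.dist i k : ℝ) ≤ 2 := by exact_mod_cast Nat.lt_succ_iff.mp (by omega)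
        exact absurd this (not_le.mpr hcon)
      refine cubic_big hlam2 hle (show (3:ℝ) ≤ distMatrix G i k from (by exact_mod_cast h3 : (3:ℝ) ≤ ((G.dist i k : ℕ):ℝ))) ha1 hc1 ?_
      linear_combination key
    have hc2' : distMatrix G j k ≤ 2 := by
      by_contra hcon
      push_neg at hcon
      have h3 : 3 ≤ G.dist j k := by
        by_contra h4
        push_neg at h4
        have : (G.dist j k : ℝ) ≤ 2 := by exact_mod_cast Nat.lt_succ_iff.mp (by omega)
        exact absurd this (not_le.mpr hcon)
      refine cubic_big hlam2 hle (show (3:ℝ) ≤ distMatrix G j k from (by exact_mod_cast h3 : (3:ℝ) ≤ ((G.dist j k : ℕ):ℝ))) ha1 hb1 ?_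
      linear_combination key
    -- convert to 1-or-2 values
    have hval : ∀ u v : Fin n, u ≠ v → distMatrix G u v ≤ 2 →
        distMatrix G u v = 1 ∨ distMatrix G u v = 2 := by
      intro u v huv hle2
      have h1 : 1 ≤ G.dist u v := hG.pos_dist_of_ne huv
      have hle2' : ((G.dist u v : ℕ):ℝ) ≤ 2 := hle2
      have h2 : G.dist u v ≤ 2 := by exact_mod_cast hle2'
      have : G.dist u v = 1 ∨ G.dist u v = 2 := by omega
      rcases this with h | h
      · left; show ((G.dist u v : ℕ) : ℝ) = 1; rw [h]; norm_num
      · right; show ((G.dist u v : ℕ) : ℝ) = 2; rw [h]; norm_num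
    have hav := hval i j hij ha2
    have hbv := hval i k hik hb2
    have hcv := hval j k hjk hc2'
    rcases hav with hav | hav <;> rcases hbv with hbv | hbv <;> rcases hcv with hcv | hcv <;>
      rw [hav, hbv, hcv] at key <;> norm_num at key
    · exact Or.inr (Or.inr (Or.inl (cubic111 hlam2 (by linarith [key]))))
    · exact Or.inr (Or.inr (Or.inr (Or.inl (cubic112 hlam2 (by linarith [key])))))
    · exact Or.inr (Or.inr (Or.inr (Or.inl (cubic112 hlam2 (by linarith [key])))))
    · exact absurd key (fun hk => cubic122 hlam2 hle (by linarith [key]))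
    · exact Or.inr (Or.inr (Or.inr (Or.inl (cubic112 hlam2 (by linarith [key])))))
    · exact absurd key (fun hk => cubic122 hlam2 hle (by linarith [key]))
    · exact absurd key (fun hk => cubic122 hlam2 hle (by linarith [key]))
    · exact absurd key (fun hk => cubic222 hlam2 hle (by linarith [key]))
  -- card 4
  · have hlam3 : lam = 3 := by
      have : ((4:ℕ):ℝ) - 1 ≤ lam := by rw [← hc4]; exact hA
      push_cast at this
      linarith
    have hcarde3 : (S.erase i₀).card = 3 := by rw [hcarde, hc4]
    have hsum0 : ∑ j ∈ S.erase i₀, (distMatrix G i₀ j * x j - x i₀) = 0 := by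
      rw [Finset.sum_sub_distrib, Finset.sum_const, hcarde3, ← key0, hlam3]
      push_cast
      ring
    have hall : ∀ j ∈ S.erase i₀, distMatrix G i₀ j * x j - x i₀ = 0 := by
      exact fun j hj => (Finset.sum_eq_zero_iff_of_nonneg
        (fun m hm => sub_nonneg.2 (hterm m hm))).mp hsum0 j hj
    have hxconst : ∀ j ∈ S, x j = x i₀ := by
      intro j hj
      by_cases hji : j = i₀
      · rw [hji]
      · have hje : j ∈ S.erase i₀ := Finset.mem_erase.2 ⟨hji, hj⟩
        have h1 := hall j hje
        have h2 : x i₀ ≤ x j := hi₀min j hj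
        have h3 : x j ≤ distMatrix G i₀ j * x j :=
          le_mul_of_one_le_left (le_of_lt (hpos j hj)) (dM_one_le hG (fun hc => hji hc.symm))
        linarith
    have hD1 : ∀ i ∈ S, ∀ j ∈ S, i ≠ j → distMatrix G i j = 1 := by
      intro i hi
      have heqi := hEq i hi
      have hsumD : ∑ j ∈ S, distMatrix G i j * x j = (∑ j ∈ S, distMatrix G i j) * x i₀ := by
        rw [Finset.sum_mul]
        exact Finset.sum_congr rfl fun j hj => by rw [hxconst j hj]
      rw [hsumD, hxconst i hi, hlam3] at heqi
      have hxpos := hpos i₀ hi₀S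
      have hsum3' : ∑ j ∈ S, distMatrix G i j = 3 :=
        mul_right_cancel₀ (ne_of_gt hxpos) heqi.symm
      have hsumerase : ∑ j ∈ S.erase i, distMatrix G i j = 3 := by
        rw [Finset.sum_erase _ (dM_diag G i)]
        exact hsum3'
      have hcerase : (S.erase i).card = 3 := by rw [Finset.card_erase_of_mem hi, hc4]
      have hz : ∑ j ∈ S.erase i, (distMatrix G i j - 1) = 0 := by
        rw [Finset.sum_sub_distrib, hsumerase, Finset.sum_const, hcerase]
        norm_num
      intro j hj hne'
      have hje : j ∈ S.erase i := Finset.mem_erase.2 ⟨fun hc => hne' hc.symm, hj⟩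
      have := (Finset.sum_eq_zero_iff_of_nonneg (fun m hm => sub_nonneg.2
        (dM_one_le hG (fun hc => (Finset.mem_erase.1 hm).1 hc.symm)))).mp hz j hje
      linarith
    refine Or.inr (Or.inr (Or.inr (Or.inr ⟨hlam3, Or.inr ⟨S, hc4, ?_⟩⟩)))
    intro i hi j hj hne'
    have h1 := hD1 i (Finset.mem_coe.1 hi) j (Finset.mem_coe.1 hj) hne'
    have hd1' : G.dist i j = 1 := by
      have : ((G.dist i j : ℕ) : ℝ) = 1 := h1
      exact_mod_cast this
    exact (SimpleGraph.dist_eq_one_iff_adj).mp hd1'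

end Aux

namespace Aux
variable {n : ℕ} {G : SimpleGraph (Fin n)}

lemma walk_cover : ∀ (z a : Fin n) (_ : G.Walk z a)
    (_ : ∀ u w, G.Adj a u → G.Adj u w → w = a ∨ G.Adj a w), z = a ∨ G.Adj a z := by
  intro z a p
  induction p with
  | nil => exact fun _ => Or.inl rfl
  | cons h q ih =>
    intro H
    rcases ih H with h' | h'
    · exact Or.inr ((h' ▸ h).symm)
    · exact H _ _ h' h.symm

/-- From a non-complete connected graph, extract a path realizing distance 2. -/
lemma exists_dist_two (hG : G.Connected) (hnc : G ≠ ⊤) :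
    ∃ a u w : Fin n, G.Adj a u ∧ G.Adj u w ∧ G.dist a w = 2 := by
  obtain ⟨a, b, hab, hnadj⟩ : ∃ a b : Fin n, a ≠ b ∧ ¬G.Adj a b := by
    by_contra hc
    push_neg at hc
    refine hnc ?_
    ext u v
    simp only [SimpleGraph.top_adj]
    exact ⟨fun h => h.ne, fun h => hc u v h⟩
  by_cases H : ∀ u w, G.Adj a u → G.Adj u w → w = a ∨ G.Adj a w
  · exfalso
    rcases walk_cover b a ((hG.preconnected b a).some) H with h | h
    · exact hab h.symm
    · exact hnadj h
  · push_neg at H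
    obtain ⟨u, w, hau, huw, hwa, hnaw⟩ := H
    refine ⟨a, u, w, hau, huw, ?_⟩
    have h1 : G.dist a w ≤ 2 := by
      calc G.dist a w ≤ G.dist a u + G.dist u w := hG.dist_triangle
      _ = 2 := by
          rw [SimpleGraph.dist_eq_one_iff_adj.mpr hau, SimpleGraph.dist_eq_one_iff_adj.mpr huw]
    have h2 : G.dist a w ≠ 1 := fun hc => hnaw (SimpleGraph.dist_eq_one_iff_adj.mp hc)
    have h3 : G.dist a w ≠ 0 := by
      intro h0
      exact hwa ((hG.dist_eq_zero_iff).mp h0).symm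
    omega

/-- Distances below the distance of a given pair are all realized. -/
lemma dist_downward (hG : G.Connected) :
    ∀ (d : ℕ) (u w : Fin n), G.dist u w = d → ∀ k, k ≤ d → ∃ z, G.dist z w = k := by
  intro d
  induction d with
  | zero =>
    intro u w _ k hk
    interval_cases k
    exact ⟨w, SimpleGraph.dist_self⟩
  | succ d ih =>
    intro u w hd k hk
    rcases Nat.eq_or_lt_of_le hk with he | hlt
    · exact ⟨u, by rw [hd, he]⟩
    · obtain ⟨p, hp⟩ := hG.exists_walk_length_eq_dist u w
      rw [hd] at hp
      cases p with
      | nil => simp at hp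
      | @cons _ y _ h q =>
        have hq : q.length = d := by simpa using hp
        have h1 : G.dist y w ≤ d := by rw [← hq]; exact SimpleGraph.dist_le q
        have h2 : G.dist y w = d := by
          have ht : G.dist u w ≤ G.dist u y + G.dist y w := hG.dist_triangle
          rw [SimpleGraph.dist_eq_one_iff_adj.mpr h, hd] at ht
          omega
        exact ih y w h2 k (by omega)

lemma sum_mul_ite (f : Fin n → ℝ) (u : Fin n) (c : ℝ) :
    ∑ j, f j * (if j = u then c else 0) = f u * c := by
  rw [Finset.sum_eq_single u]
  · rw [if_pos rfl]
  · intro b _ hb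
    rw [if_neg hb, mul_zero]
  · intro h
    exact absurd (Finset.mem_univ u) h

/-- Pair distances are Pareto eigenvalues. -/
lemma mem_pareto_pair (hG : G.Connected) {u v : Fin n} (hne : u ≠ v) :
    ((G.dist u v : ℕ) : ℝ) ∈ distParetoSet G := by
  classical
  set x : Fin n → ℝ := fun i => (if i = u then 1 else 0) + (if i = v then 1 else 0) with hx
  have hxu : x u = 1 := by rw [hx]; simp [hne]
  have hxv : x v = 1 := by rw [hx]; simp [Ne.symm hne]
  have hmul : ∀ i, (distMatrix G).mulVec x i = distMatrix G i u + distMatrix G i v := by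
    intro i
    rw [mulVec_eq_sum]
    simp only [hx, mul_add, Finset.sum_add_distrib, sum_mul_ite, mul_one]
  apply mem_pareto_of G _ x
  · intro hc
    have : x u = 0 := by rw [hc]; rfl
    rw [hxu] at this; norm_num at this
  · intro i; rw [hx]; dsimp only; split <;> split <;> norm_num
  · intro i hi
    have hiuv : i = u ∨ i = v := by
      by_contra hc
      push_neg at hc
      apply hi
      rw [hx]; dsimp only; rw [if_neg hc.1, if_neg hc.2, add_zero]
    rcases hiuv with h | h
    · rw [h, hmul, hxu, dM_diag, zero_add, mul_one]
      rfl
    · rw [h, hmul, hxv, dM_diag, add_zero, mul_one]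
      show ((G.dist v u : ℕ):ℝ) = ((G.dist u v : ℕ):ℝ)
      rw [SimpleGraph.dist_comm]

/-- 0 is a Pareto eigenvalue. -/
lemma mem_pareto_zero (u : Fin n) : (0:ℝ) ∈ distParetoSet G := by
  classical
  set x : Fin n → ℝ := fun i => if i = u then 1 else 0 with hx
  apply mem_pareto_of G _ x
  · intro hc
    have : x u = 0 := by rw [hc]; rfl
    rw [hx] at this; simp at this
  · intro i; rw [hx]; dsimp only; split <;> norm_num
  · intro i hi
    have hiu : i = u := by
      by_contra hc
      apply hi
      rw [hx]; dsimp only; rw [if_neg hc]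
    subst hiu
    rw [zero_mul, mulVec_eq_sum]
    simp only [hx, sum_mul_ite, dM_diag, zero_mul]

/-- 1 + √3 is a Pareto eigenvalue provided some geodesic of length 2 exists. -/
lemma mem_pareto_sqrt3 (hG : G.Connected) {a u w : Fin n}
    (hau : G.Adj a u) (huw : G.Adj u w) (haw : G.dist a w = 2) :
    (1 + Real.sqrt 3 : ℝ) ∈ distParetoSet G := by
  classical
  have hs3 : Real.sqrt 3 ^ 2 = 3 := Real.sq_sqrt (by norm_num)
  have hs3pos : 1 < Real.sqrt 3 := by
    nlinarith [hs3, Real.sqrt_nonneg 3]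
  have hanu : a ≠ u := hau.ne
  have hunw : u ≠ w := huw.ne
  have hanw : a ≠ w := by
    intro hc
    rw [hc] at haw
    rw [SimpleGraph.dist_self] at haw
    norm_num at haw
  have hDau : distMatrix G a u = 1 := by
    show ((G.dist a u : ℕ):ℝ) = 1
    rw [SimpleGraph.dist_eq_one_iff_adj.mpr hau]; norm_num
  have hDuw : distMatrix G u w = 1 := by
    show ((G.dist u w : ℕ):ℝ) = 1
    rw [SimpleGraph.dist_eq_one_iff_adj.mpr huw]; norm_num
  have hDaw : distMatrix G a w = 2 := by
    show ((G.dist a w : ℕ):ℝ) = 2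
    rw [haw]; norm_num
  set x : Fin n → ℝ := fun i => (if i = a then 1 else 0) + (if i = w then 1 else 0)
    + (if i = u then Real.sqrt 3 - 1 else 0) with hx
  have hxa : x a = 1 := by rw [hx]; simp [hanu, hanw]
  have hxw : x w = 1 := by rw [hx]; simp [Ne.symm hanw, Ne.symm hunw]
  have hxu : x u = Real.sqrt 3 - 1 := by rw [hx]; simp [Ne.symm hanu, hunw]
  have hmul : ∀ i, (distMatrix G).mulVec x i
      = distMatrix G i a + distMatrix G i w + distMatrix G i u * (Real.sqrt 3 - 1) := by
    intro i
    rw [mulVec_eq_sum]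
    simp only [hx, mul_add, Finset.sum_add_distrib, sum_mul_ite, mul_one]
  apply mem_pareto_of G _ x
  · intro hc
    have : x a = 0 := by rw [hc]; rfl
    rw [hxa] at this; norm_num at this
  · intro i; rw [hx]; dsimp only
    split <;> split <;> split <;> norm_num <;> linarith
  · intro i hi
    have hiuv : i = a ∨ i = w ∨ i = u := by
      by_contra hc
      push_neg at hc
      apply hi
      rw [hx]; dsimp only; rw [if_neg hc.1, if_neg hc.2.1, if_neg hc.2.2]
      ring
    rcases hiuv with h | h | h
    · rw [h, hmul, hxa, dM_diag, hDaw, hDau, mul_one]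
      ring
    · rw [h, hmul, hxw, dM_diag, mul_one, dM_symm G w a, hDaw, dM_symm G w u, hDuw]
      ring
    · rw [h, hmul, hxu, dM_diag, dM_symm G u a, hDau, hDuw]
      nlinarith [hs3]

/-- 3 is a Pareto eigenvalue when a 4-clique exists. -/
lemma mem_pareto_clique (hG : G.Connected) {K : Finset (Fin n)} (hc : K.card = 4)
    (hadj : (K : Set (Fin n)).Pairwise G.Adj) : (3:ℝ) ∈ distParetoSet G := by
  classical
  set x : Fin n → ℝ := fun i => if i ∈ K then 1 else 0 with hx
  have hKne : K.Nonempty := Finset.card_pos.mp (by omega)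
  have hmul : ∀ i, (distMatrix G).mulVec x i = ∑ j ∈ K, distMatrix G i j := by
    intro i
    rw [mulVec_eq_sum]
    rw [← Finset.sum_filter_add_sum_filter_not Finset.univ (fun j => j ∈ K)]
    have h2 : ∑ j ∈ Finset.univ.filter (fun j => j ∉ K), distMatrix G i j * x j = 0 := by
      apply Finset.sum_eq_zero
      intro j hj
      have : j ∉ K := (Finset.mem_filter.mp hj).2
      rw [hx]; dsimp only; rw [if_neg this, mul_zero]
    rw [h2, add_zero]
    have h3 : Finset.univ.filter (fun j => j ∈ K) = K := by
      ext j; simp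
    rw [h3]
    apply Finset.sum_congr rfl
    intro j hj
    rw [hx]; dsimp only; rw [if_pos hj, mul_one]
  apply mem_pareto_of G _ x
  · intro hcon
    obtain ⟨i, hi⟩ := hKne
    have : x i = 0 := by rw [hcon]; rfl
    rw [hx] at this; dsimp only at this; rw [if_pos hi] at this; norm_num at this
  · intro i; rw [hx]; dsimp only; split <;> norm_num
  · intro i hi
    have hiK : i ∈ K := by
      by_contra hcon
      apply hi
      rw [hx]; dsimp only; rw [if_neg hcon]
    have hxi : x i = 1 := by rw [hx]; dsimp only; rw [if_pos hiK]
    rw [hmul, hxi, mul_one]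
    have hD1 : ∀ j ∈ K.erase i, distMatrix G i j = 1 := by
      intro j hj
      have hji := Finset.mem_erase.mp hj
      have hadj' := hadj (Finset.mem_coe.mpr hiK) (Finset.mem_coe.mpr hji.2)
        (fun hcc => hji.1 hcc.symm)
      show ((G.dist i j : ℕ):ℝ) = 1
      rw [SimpleGraph.dist_eq_one_iff_adj.mpr hadj']; norm_num
    rw [← Finset.sum_erase _ (dM_diag G i)]
    rw [Finset.sum_congr rfl hD1, Finset.sum_const, Finset.card_erase_of_mem hiK, hc]
    norm_num

end Aux

namespace Aux
variable {n : ℕ} {G : SimpleGraph (Fin n)}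

set_option maxHeartbeats 1000000

lemma exists_pareto_ge_three (hG : G.Connected) (hn : 4 ≤ n) :
    ∃ lam : ℝ, lam ∈ distParetoSet G ∧ 3 ≤ lam := by
  classical
  set A := distMatrix G with hAdef
  set T := Matrix.toEuclideanCLM (𝕜 := ℝ) A with hTdef
  have hA : IsSelfAdjoint A := by
    show star A = A
    rw [Matrix.star_eq_conjTranspose]
    ext i j
    simp only [Matrix.conjTranspose_apply, star_trivial]
    exact dM_symm G j i
  have hT : IsSelfAdjoint T := by
    show star T = T
    rw [hTdef, ← map_star, hA]
  -- coordinates of T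
  have happly : ∀ (x : EuclideanSpace ℝ (Fin n)) (i : Fin n),
      T x i = A.mulVec (fun j => x j) i := by
    intro x i
    have h := Matrix.ofLp_toEuclideanCLM (𝕜 := ℝ) A x
    have h2 := congrFun h i
    exact h2
  have hf : ∀ x : EuclideanSpace ℝ (Fin n),
      T.reApplyInnerSelf x = ∑ i, A.mulVec (fun j => x j) i * x i := by
    intro x
    rw [ContinuousLinearMap.reApplyInnerSelf_apply]
    have h1 : (inner ℝ (T x) x : ℝ) = ∑ i, (T x i) * x i := by
      simp [PiLp.inner_apply, RCLike.inner_apply, starRingEnd_apply, mul_comm]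
    rw [show RCLike.re (inner ℝ (T x) x : ℝ) = (inner ℝ (T x) x : ℝ) from rfl, h1]
    exact Finset.sum_congr rfl fun i _ => by rw [happly]
  -- a maximizer on the unit sphere
  have hnpos : 0 < n := by omega
  have hsne : (Metric.sphere (0 : EuclideanSpace ℝ (Fin n)) 1).Nonempty := by
    refine ⟨EuclideanSpace.single ⟨0, hnpos⟩ (1:ℝ), ?_⟩
    simp [EuclideanSpace.norm_single]
  obtain ⟨x₀, hx₀s, hmax⟩ := (isCompact_sphere (0 : EuclideanSpace ℝ (Fin n)) 1).exists_isMaxOn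
    hsne T.reApplyInnerSelf_continuous.continuousOn
  have hx₀n : ‖x₀‖ = 1 := by simpa using hx₀s
  -- entrywise absolute value of the maximizer
  set Y : EuclideanSpace ℝ (Fin n) := (WithLp.equiv 2 (Fin n → ℝ)).symm (fun i => |x₀ i|)
    with hYdef
  have hYi : ∀ i, Y i = |x₀ i| := fun i => rfl
  have hYnorm : ‖Y‖ = 1 := by
    rw [EuclideanSpace.norm_eq]
    rw [show ∑ i, ‖Y i‖^2 = ∑ i, ‖x₀ i‖^2 by
      exact Finset.sum_congr rfl fun i _ => by rw [hYi, Real.norm_eq_abs, Real.norm_eq_abs, abs_abs]]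
    rw [← EuclideanSpace.norm_eq, hx₀n]
  have hYs : Y ∈ Metric.sphere (0 : EuclideanSpace ℝ (Fin n)) 1 := by
    simpa using hYnorm
  have hYne : Y ≠ 0 := by
    intro hc
    rw [hc, norm_zero] at hYnorm
    norm_num at hYnorm
  -- Y is also a maximizer
  have hfY : T.reApplyInnerSelf x₀ ≤ T.reApplyInnerSelf Y := by
    rw [hf, hf]
    simp only [mulVec_eq_sum, Finset.sum_mul]
    apply Finset.sum_le_sum
    intro i _
    apply Finset.sum_le_sum
    intro j _
    calc A i j * x₀ j * x₀ i ≤ |A i j * x₀ j * x₀ i| := le_abs_self _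
    _ = A i j * |x₀ j| * |x₀ i| := by
        rw [abs_mul, abs_mul, abs_of_nonneg (dM_nonneg G i j)]
    _ = A i j * Y j * Y i := by rw [hYi, hYi]
  have hmaxY : IsMaxOn T.reApplyInnerSelf (Metric.sphere (0 : EuclideanSpace ℝ (Fin n)) ‖Y‖) Y := by
    rw [hYnorm]
    intro z hz
    exact le_trans (hmax hz) hfY
  -- the eigenvector theorem
  have hev := hT.hasEigenvector_of_isMaxOn hYne hmaxY
  set lam : ℝ := ↑(⨆ x : { x : EuclideanSpace ℝ (Fin n) // x ≠ 0 }, T.rayleighQuotient x)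
    with hlamdef
  have heig : T Y = lam • Y := Module.End.mem_eigenspace_iff.mp hev.1
  have hcoord : ∀ i, A.mulVec (fun j => Y j) i = lam * Y i := by
    intro i
    rw [← happly]
    rw [heig]
    rfl
  refine ⟨lam, ?_, ?_⟩
  · apply mem_pareto_of G lam (fun i => Y i)
    · intro hc
      apply hYne
      apply (WithLp.equiv 2 (Fin n → ℝ)).injective
      ext i
      exact congrFun hc i
    · intro i
      rw [hYi]
      exact abs_nonneg _
    · intro i _
      exact hcoord i
  · -- lam is at least the Rayleigh quotient of the normalized all-ones vector
    have hsum2 : ∑ i, Y i * Y i = 1 := by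
      have h1 : Real.sqrt (∑ i, ‖Y i‖^2) = 1 := by rw [← EuclideanSpace.norm_eq]; exact hYnorm
      have h2 : ∑ i, ‖Y i‖^2 = 1 := by
        have h3 : 0 ≤ ∑ i, ‖Y i‖^2 := Finset.sum_nonneg fun i _ => sq_nonneg _
        nlinarith [Real.sq_sqrt h3, h1]
      rw [← h2]
      exact Finset.sum_congr rfl fun i _ => by
        rw [Real.norm_eq_abs, sq_abs]; ring
    have hlamval : T.reApplyInnerSelf Y = lam := by
      rw [hf]
      rw [show ∑ i, A.mulVec (fun j => Y j) i * Y i = ∑ i, lam * (Y i * Y i) from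
        Finset.sum_congr rfl fun i _ => by rw [hcoord i]; ring]
      rw [← Finset.mul_sum, hsum2, mul_one]
    -- the all-ones comparison vector
    set c : ℝ := (Real.sqrt n)⁻¹ with hcdef
    have hsn : Real.sqrt n > 0 := Real.sqrt_pos.mpr (by exact_mod_cast hnpos)
    have hc2 : c^2 = (n:ℝ)⁻¹ := by
      rw [hcdef, inv_pow]
      congr 1
      rw [Real.sq_sqrt (by positivity)]
    set u : EuclideanSpace ℝ (Fin n) := (WithLp.equiv 2 (Fin n → ℝ)).symm (fun _ => c)
      with hudef
    have hui : ∀ i, u i = c := fun i => rfl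
    have hun : ‖u‖ = 1 := by
      rw [EuclideanSpace.norm_eq]
      rw [show ∑ i : Fin n, ‖u i‖^2 = ∑ _i : Fin n, c^2 from
        Finset.sum_congr rfl fun i _ => by rw [hui, Real.norm_eq_abs, sq_abs]]
      rw [Finset.sum_const, Finset.card_univ, Fintype.card_fin, nsmul_eq_mul, hc2]
      rw [mul_inv_cancel₀ (by exact_mod_cast hnpos.ne')]
      exact Real.sqrt_one
    have hus : u ∈ Metric.sphere (0 : EuclideanSpace ℝ (Fin n)) 1 := by simpa using hun
    have hfu : (n:ℝ) - 1 ≤ T.reApplyInnerSelf u := by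
      rw [hf]
      have hterm : ∀ i : Fin n, ((n:ℝ) - 1) * c^2 ≤ A.mulVec (fun j => u j) i * u i := by
        intro i
        rw [hui, mulVec_eq_sum]
        have h1 : ∑ j, A i j * u j = (∑ j, A i j) * c :=
          by rw [Finset.sum_mul]; exact Finset.sum_congr rfl fun j _ => by rw [hui]
        rw [h1]
        have h2 : (n:ℝ) - 1 ≤ ∑ j, A i j := by
          rw [← Finset.sum_erase _ (dM_diag G i)]
          calc (n:ℝ) - 1 = ∑ _j ∈ Finset.univ.erase i, (1:ℝ) := by
                rw [Finset.sum_const, Finset.card_erase_of_mem (Finset.mem_univ i)]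
                rw [Finset.card_univ, Fintype.card_fin, nsmul_eq_mul, Nat.cast_sub (by omega)]
                push_cast; ring
          _ ≤ ∑ j ∈ Finset.univ.erase i, A i j :=
              Finset.sum_le_sum fun j hj => dM_one_le hG
                (fun hc' => (Finset.mem_erase.mp hj).1 hc'.symm)
        calc ((n:ℝ) - 1) * c^2 = ((n:ℝ) - 1) * c * c := by ring
        _ ≤ (∑ j, A i j) * c * c := by
            have hcpos : 0 < c := by rw [hcdef]; positivity
            apply mul_le_mul_of_nonneg_right _ hcpos.le
            exact mul_le_mul_of_nonneg_right h2 hcpos.le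
      calc (n:ℝ) - 1 = ∑ _i : Fin n, ((n:ℝ) - 1) * c^2 := by
            rw [Finset.sum_const, Finset.card_univ, Fintype.card_fin, nsmul_eq_mul, hc2]
            field_simp
      _ ≤ ∑ i, A.mulVec (fun j => u j) i * u i := Finset.sum_le_sum fun i _ => hterm i
    have := hmax hus
    have h4n : (4:ℝ) ≤ (n:ℝ) := by exact_mod_cast hn
    calc (3:ℝ) ≤ (n:ℝ) - 1 := by linarith
    _ ≤ T.reApplyInnerSelf u := hfu
    _ ≤ T.reApplyInnerSelf x₀ := this
    _ ≤ T.reApplyInnerSelf Y := hfY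
    _ = lam := hlamval

end Aux

namespace Aux
variable {n : ℕ} {G : SimpleGraph (Fin n)}

set_option maxHeartbeats 1000000

lemma eval_charpoly' (A : Matrix (Fin n) (Fin n) ℝ) (t : ℝ) :
    (Matrix.charpoly A).eval t = Matrix.det (t • (1 : Matrix (Fin n) (Fin n) ℝ) - A) := by
  rw [Matrix.charpoly]
  have h1 : (Matrix.charmatrix A).det.eval t
      = ((Matrix.charmatrix A).map (Polynomial.evalRingHom t)).det := by
    rw [← Polynomial.coe_evalRingHom, RingHom.map_det, RingHom.mapMatrix_apply]
  rw [h1]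
  congr 1
  ext i j
  by_cases hij : i = j
  · subst hij
    simp [Matrix.charmatrix_apply_eq, Matrix.one_apply_eq]
  · simp [Matrix.charmatrix_apply_ne _ _ _ hij, Matrix.one_apply_ne hij]

/-- The padded principal submatrix supported on `J`. -/
noncomputable def padMat (G : SimpleGraph (Fin n)) (J : Finset (Fin n)) :
    Matrix (Fin n) (Fin n) ℝ :=
  fun i j => if i ∈ J ∧ j ∈ J then distMatrix G i j else 0

lemma pareto_finite (G : SimpleGraph (Fin n)) : (distParetoSet G).Finite := by
  classical
  have hsub : distParetoSet G ⊆
      ⋃ (J : Finset (Fin n)), {t : ℝ | (Matrix.charpoly (padMat G J)).IsRoot t} := by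
    intro lam hlam
    obtain ⟨x, hp⟩ := hlam
    have heq := eq_on_support (G := G) hp
    obtain ⟨hne, hnn, hge, hray⟩ := hp
    set S : Finset (Fin n) := Finset.univ.filter (fun j => x j ≠ 0) with hS
    have hzero : ∀ j, j ∉ S → x j = 0 := by
      intro j hj
      by_contra hc
      exact hj (by simp [hS, hc])
    refine Set.mem_iUnion.mpr ⟨S, ?_⟩
    show (Matrix.charpoly (padMat G S)).eval lam = 0
    rw [eval_charpoly']
    rw [← Matrix.exists_mulVec_eq_zero_iff]
    refine ⟨x, hne, ?_⟩
    ext i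
    rw [Matrix.sub_mulVec, Matrix.smul_mulVec, Matrix.one_mulVec]
    have hpad : (padMat G S).mulVec x i = lam * x i := by
      by_cases hiS : i ∈ S
      · have h1 : (padMat G S).mulVec x i = (distMatrix G).mulVec x i := by
          rw [mulVec_eq_sum, mulVec_eq_sum]
          refine Finset.sum_congr rfl fun j _ => ?_
          by_cases hjS : j ∈ S
          · rw [show padMat G S i j = distMatrix G i j from if_pos ⟨hiS, hjS⟩]
          · rw [hzero j hjS, mul_zero, mul_zero]
        rw [h1]
        exact heq i (by simpa [hS] using hiS)
      · have h1 : (padMat G S).mulVec x i = 0 := by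
          rw [mulVec_eq_sum]
          apply Finset.sum_eq_zero
          intro j _
          rw [show padMat G S i j = 0 from if_neg (fun hc => hiS hc.1), zero_mul]
        rw [h1, hzero i hiS, mul_zero]
    simp [Pi.sub_apply, Pi.smul_apply, smul_eq_mul, hpad]
  apply Set.Finite.subset _ hsub
  apply Set.finite_iUnion
  intro J
  exact Polynomial.finite_setOf_isRoot (Matrix.charpoly_monic _).ne_zero

end Aux

namespace Aux
variable {n : ℕ} {G : SimpleGraph (Fin n)}

lemma diam_iff (hG : G.Connected) (hn : 1 ≤ n) :
    (∃ u w : Fin n, G.dist u w = 3) ↔ 3 ≤ G.diam := by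
  have hne : Nonempty (Fin n) := ⟨⟨0, by omega⟩⟩
  constructor
  · rintro ⟨u, w, h⟩
    have hnt : G.ediam ≠ ⊤ := by
      obtain ⟨a, b, hab⟩ := SimpleGraph.exists_edist_eq_ediam_of_finite (G := G)
      rw [← hab]
      exact (SimpleGraph.edist_ne_top_iff_reachable).mpr (hG.preconnected a b)
    calc 3 = G.dist u w := h.symm
    _ ≤ G.diam := SimpleGraph.dist_le_diam hnt
  · intro h3
    obtain ⟨u, w, huw⟩ := SimpleGraph.exists_dist_eq_diam (G := G)
    obtain ⟨z, hz⟩ := dist_downward hG _ u w huw 3 (by omega)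
    exact ⟨z, w, hz⟩

lemma clique_iff :
    (∃ K : Finset (Fin n), K.card = 4 ∧ (K : Set (Fin n)).Pairwise G.Adj) ↔
      4 ≤ G.cliqueNum := by
  constructor
  · rintro ⟨K, hc, hp⟩
    have hcl : G.IsClique (K : Set (Fin n)) := hp
    have := SimpleGraph.IsClique.card_le_cliqueNum (G := G) (t := K) (tc := hcl)
    omega
  · intro h4
    obtain ⟨s, hs⟩ := G.exists_isNClique_cliqueNum
    obtain ⟨t, hts, htc⟩ := Finset.exists_subset_card_eq
      (show 4 ≤ s.card by rw [hs.card_eq]; exact h4)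
    exact ⟨t, htc, hs.isClique.subset (Finset.coe_subset.mpr hts)⟩

end Aux

theorem stmt14' (n : ℕ) (hn : 4 ≤ n) (G : SimpleGraph (Fin n)) (hG : G.Connected)
    (hnc : G ≠ ⊤) :
    ∃ μ5 : ℝ, (μ5 ∈ distParetoSet G ∧ {x ∈ distParetoSet G | x < μ5}.ncard = 5 - 1) ∧ 3 ≤ μ5 ∧
      (μ5 = 3 ↔ 4 ≤ G.cliqueNum ∨ 3 ≤ G.diam) := by
  classical
  have hPfin := Aux.pareto_finite G
  have hs3 : Real.sqrt 3 ^ 2 = 3 := Real.sq_sqrt (by norm_num)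
  have hs3a : 1 + Real.sqrt 3 < 3 := by nlinarith [Real.sqrt_nonneg 3]
  have hs3b : 2 < 1 + Real.sqrt 3 := by nlinarith [Real.sqrt_nonneg 3]
  obtain ⟨a, u, w, hau, huw, haw⟩ := Aux.exists_dist_two hG hnc
  have h0 : (0:ℝ) ∈ distParetoSet G := Aux.mem_pareto_zero ⟨0, by omega⟩
  have h1 : (1:ℝ) ∈ distParetoSet G := by
    have := Aux.mem_pareto_pair hG hau.ne
    rw [SimpleGraph.dist_eq_one_iff_adj.mpr hau] at this
    simpa using this
  have h2 : (2:ℝ) ∈ distParetoSet G := by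
    have hne : a ≠ w := by
      intro hc
      rw [hc, SimpleGraph.dist_self] at haw
      norm_num at haw
    have := Aux.mem_pareto_pair hG hne
    rw [haw] at this
    simpa using this
  have h3 : (1 + Real.sqrt 3 : ℝ) ∈ distParetoSet G := Aux.mem_pareto_sqrt3 hG hau huw haw
  obtain ⟨lamb, hlambP, hlamb3⟩ := Aux.exists_pareto_ge_three hG hn
  set T : Set ℝ := distParetoSet G ∩ Set.Ici 3 with hT
  have hTfin : T.Finite := hPfin.subset Set.inter_subset_left
  have hTne : T.Nonempty := ⟨lamb, hlambP, hlamb3⟩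
  obtain ⟨μ, hmuT, hmumin⟩ := Set.exists_min_image T id hTfin hTne
  have hmuP : μ ∈ distParetoSet G := hmuT.1
  have hmu3 : (3:ℝ) ≤ μ := hmuT.2
  have hsmall : {x ∈ distParetoSet G | x < μ} = {0, 1, 2, 1 + Real.sqrt 3} := by
    ext y
    constructor
    · rintro ⟨hyP, hymu⟩
      have hy3 : y ≤ 3 := by
        by_contra hc
        push_neg at hc
        have hyT : y ∈ T := ⟨hyP, Set.mem_Ici.mpr (le_of_lt (by linarith))⟩
        exact absurd (hmumin y hyT) (not_le.mpr hymu)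
      rcases Aux.classify hG hyP hy3 with h | h | h | h | ⟨h3eq, _⟩
      · simp [h]
      · simp [h]
      · simp [h]
      · simp [h]
      · exfalso
        have hyT : y ∈ T := ⟨hyP, by rw [h3eq]; exact Set.self_mem_Ici⟩
        have := hmumin y hyT
        rw [h3eq] at hymu
        simp only [id] at this
        linarith
    · intro hy
      simp only [Set.mem_insert_iff, Set.mem_singleton_iff] at hy
      rcases hy with rfl | rfl | rfl | rfl
      · exact ⟨h0, by linarith⟩
      · exact ⟨h1, by linarith⟩
      · exact ⟨h2, by linarith⟩
      · exact ⟨h3, by linarith⟩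
  have hcount : ({0, 1, 2, 1 + Real.sqrt 3} : Set ℝ).ncard = 4 := by
    rw [Set.ncard_insert_of_notMem (by
        simp only [Set.mem_insert_iff, Set.mem_singleton_iff]
        push_neg
        refine ⟨by norm_num, by norm_num, by linarith⟩)
      ((Set.finite_singleton _).insert _ |>.insert _)]
    rw [Set.ncard_insert_of_notMem (by
        simp only [Set.mem_insert_iff, Set.mem_singleton_iff]
        push_neg
        refine ⟨by norm_num, by linarith⟩)
      ((Set.finite_singleton _).insert _)]
    rw [Set.ncard_pair (by linarith : (2:ℝ) ≠ 1 + Real.sqrt 3)]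
  refine ⟨μ, ⟨hmuP, by rw [hsmall, hcount]⟩, hmu3, ?_, ?_⟩
  · intro hmueq
    have h3P : (3:ℝ) ∈ distParetoSet G := hmueq ▸ hmuP
    rcases Aux.classify hG h3P le_rfl with h | h | h | h | ⟨_, hcase⟩
    · norm_num at h
    · norm_num at h
    · norm_num at h
    · linarith
    · rcases hcase with ⟨u', w', hd⟩ | ⟨K, hc, hp⟩
      · exact Or.inr ((Aux.diam_iff hG (by omega)).mp ⟨u', w', hd⟩)
      · exact Or.inl (Aux.clique_iff.mp ⟨K, hc, hp⟩)
  · intro hcond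
    have h3P : (3:ℝ) ∈ distParetoSet G := by
      rcases hcond with h4 | hd3
      · obtain ⟨K, hc, hp⟩ := Aux.clique_iff.mpr h4
        exact Aux.mem_pareto_clique hG hc hp
      · obtain ⟨u', w', hd⟩ := (Aux.diam_iff hG (by omega)).mpr hd3
        have hne : u' ≠ w' := by
          intro hcc
          rw [hcc, SimpleGraph.dist_self] at hd
          norm_num at hd
        have := Aux.mem_pareto_pair hG hne
        rw [hd] at this
        simpa using this
    have hmule : μ ≤ 3 := hmumin 3 ⟨h3P, Set.self_mem_Ici⟩
    linarith


theorem stmt14 (n : ℕ) (hn : 4 ≤ n) (G : SimpleGraph (Fin n)) (hG : G.Connected)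
    (hnc : G ≠ ⊤) :
    ∃ μ5 : ℝ, IsKthSmallest (distParetoSet G) 5 μ5 ∧ 3 ≤ μ5 ∧
      (μ5 = 3 ↔ 4 ≤ G.cliqueNum ∨ 3 ≤ G.diam) := by
  obtain ⟨μ, hk, h3, hiff⟩ := stmt14' n hn G hG hnc
  exact ⟨μ, hk, h3, hiff⟩
end
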